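/- arXiv:2212.05522 — 7 statements merged into one kernel-verified Lean document; each statement's English description precedes it below -/
import Mathlib

section
/- Let 𝓕 be an ω-closed family of nonempty subsets of ω. For elements (i₁,j₁,F₁) and (i₂,j₂,F₂) of the semigroup B_ω^𝓕, one has (i₁,j₁,F₁) ≼ (i₂,j₂,F₂) (i.e., there exists an idempotent e ∈ B_ω^𝓕 with (i₁,j₁,F₁) = (i₂,j₂,F₂)·e) if and only if there exists k ∈ ω such that i₁ = i₂ + k, j₁ = j₂ + k and F₁ ⊆ (−k)+F₂. -/
/-- For `n : ℕ` and `F ⊆ ω`, `wShift n F` is the set `(−n)+F = {x ∈ ω : x + n ∈ F}`. -/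
def wShift (n : ℕ) (F : Set ℕ) : Set ℕ := {x | x + n ∈ F}

/-- A family `𝓕` of subsets of `ω` is ω-closed if `F₁ ∩ ((−n)+F₂) ∈ 𝓕`
for all `n ∈ ω` and `F₁, F₂ ∈ 𝓕`. -/
def OmegaClosed (𝓕 : Set (Set ℕ)) : Prop :=
  ∀ n : ℕ, ∀ F₁ ∈ 𝓕, ∀ F₂ ∈ 𝓕, F₁ ∩ wShift n F₂ ∈ 𝓕

/-- A subset `F ⊆ ω` is inductive if `n ∈ F` implies `n+1 ∈ F`. -/
def InductiveSet (F : Set ℕ) : Prop := ∀ n : ℕ, n ∈ F → n + 1 ∈ F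

/-- The underlying set `ω × ω × 𝓕` of the semigroup `B_ω^𝓕`. -/
abbrev BF (𝓕 : Set (Set ℕ)) : Type := ℕ × ℕ × {F : Set ℕ // F ∈ 𝓕}

/-- The multiplication of the semigroup `B_ω^𝓕`:
`(i₁,j₁,F₁)·(i₂,j₂,F₂) = (i₁−j₁+i₂, j₂, ((j₁−i₂)+F₁) ∩ F₂)` if `j₁ ≤ i₂`, and
`(i₁, j₁−i₂+j₂, F₁ ∩ ((i₂−j₁)+F₂))` if `j₁ ≥ i₂`. -/
def BFmul {𝓕 : Set (Set ℕ)} (h : OmegaClosed 𝓕) (a b : BF 𝓕) : BF 𝓕 :=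
  if a.2.1 ≤ b.1 then
    (a.1 + (b.1 - a.2.1), b.2.1,
      ⟨wShift (b.1 - a.2.1) a.2.2.1 ∩ b.2.2.1, by
        rw [Set.inter_comm]; exact h _ _ b.2.2.2 _ a.2.2.2⟩)
  else
    (a.1, b.2.1 + (a.2.1 - b.1),
      ⟨a.2.2.1 ∩ wShift (a.2.1 - b.1) b.2.2.1, h _ _ a.2.2.2 _ b.2.2.2⟩)

lemma wShift_zero (F : Set ℕ) : wShift 0 F = F := by
  ext x; simp [wShift]

lemma idem_of_diag {𝓕 : Set (Set ℕ)} (hcl : OmegaClosed 𝓕) (m : ℕ)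
    (F : {F : Set ℕ // F ∈ 𝓕}) : BFmul hcl (m, m, F) (m, m, F) = (m, m, F) := by
  simp only [BFmul, le_refl, if_true, Nat.sub_self, Nat.add_zero]
  refine Prod.ext rfl (Prod.ext rfl (Subtype.ext ?_))
  simp [wShift_zero]

/-- Proposition 2.1: the natural partial order on `B_ω^𝓕`. For a nonempty ω-closed
family `𝓕`, `(i₁,j₁,F₁) ≼ (i₂,j₂,F₂)` (i.e. `a = b·e` for some idempotent `e`)
iff there is `k ∈ ω` with `i₁ = i₂ + k`, `j₁ = j₂ + k` and `F₁ ⊆ (−k)+F₂`. -/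
theorem statement0 (𝓕 : Set (Set ℕ)) (hcl : OmegaClosed 𝓕)
    (hne : ∀ F ∈ 𝓕, F.Nonempty) (a b : BF 𝓕) :
    (∃ e : BF 𝓕, BFmul hcl e e = e ∧ a = BFmul hcl b e) ↔
      ∃ k : ℕ, a.1 = b.1 + k ∧ a.2.1 = b.2.1 + k ∧ a.2.2.1 ⊆ wShift k b.2.2.1 := by
  constructor
  · rintro ⟨e, hee, hab⟩
    -- first show e.1 = e.2.1
    have hm : e.1 = e.2.1 := by
      by_cases h : e.2.1 ≤ e.1
      · have h1 := congrArg Prod.fst hee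
        simp only [BFmul, if_pos h] at h1
        omega
      · have h1 := congrArg (fun x : BF 𝓕 => x.2.1) hee
        simp only [BFmul, if_neg h] at h1
        omega
    by_cases h : b.2.1 ≤ e.1
    · refine ⟨e.1 - b.2.1, ?_, ?_, ?_⟩
      · have := congrArg Prod.fst hab
        simp only [BFmul, if_pos h] at this; exact this
      · have := congrArg (fun x : BF 𝓕 => x.2.1) hab
        simp only [BFmul, if_pos h] at this; omega
      · have := congrArg (fun x : BF 𝓕 => x.2.2.1) hab
        simp only [BFmul, if_pos h] at this
        rw [this]; exact Set.inter_subset_left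
    · refine ⟨0, ?_, ?_, ?_⟩
      · have := congrArg Prod.fst hab
        simp only [BFmul, if_neg h] at this; omega
      · have := congrArg (fun x : BF 𝓕 => x.2.1) hab
        simp only [BFmul, if_neg h] at this; omega
      · have := congrArg (fun x : BF 𝓕 => x.2.2.1) hab
        simp only [BFmul, if_neg h] at this
        rw [this, wShift_zero]; exact Set.inter_subset_left
  · rintro ⟨k, h1, h2, h3⟩
    refine ⟨(b.2.1 + k, b.2.1 + k, a.2.2), idem_of_diag hcl _ _, ?_⟩
    simp only [BFmul]
    rw [if_pos (Nat.le_add_right b.2.1 k)]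
    simp only [Nat.add_sub_cancel_left]
    refine Prod.ext h1 (Prod.ext h2 (Subtype.ext ?_))
    exact (Set.inter_eq_right.mpr h3).symm
end

section
/- Let 𝓕 be an ω-closed family of nonempty inductive subsets of ω. For every pair of elements a, b of the semigroup B_ω^𝓕, both sets {x ∈ B_ω^𝓕 : a·x = b} and {x ∈ B_ω^𝓕 : x·a = b} are finite. -/
/-- A nonempty inductive subset of `ω` equals `Ici` of its infimum. -/
lemma eqIci_aux (F : Set ℕ) (hF : F.Nonempty) (hi : InductiveSet F) : F = Set.Ici (sInf F) := by
  ext n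
  constructor
  · intro hn; exact Nat.sInf_le hn
  · intro hn; rw [Set.mem_Ici] at hn
    have key : ∀ k, sInf F + k ∈ F := by
      intro k; induction k with
      | zero => exact Nat.sInf_mem hF
      | succ m ih => exact hi _ ih
    have : sInf F + (n - sInf F) = n := by omega
    rw [← this]; exact key _

/-- Bounded subsets of `BF 𝓕` are finite. -/
lemma BF_bounded_finite (𝓕 : Set (Set ℕ)) (hne : ∀ F ∈ 𝓕, F.Nonempty)
    (hind : ∀ F ∈ 𝓕, InductiveSet F) (M : ℕ) :
    {x : BF 𝓕 | x.1 ≤ M ∧ x.2.1 ≤ M ∧ sInf x.2.2.1 ≤ M}.Finite := by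
  apply Set.Finite.of_finite_image (f := fun x : BF 𝓕 => (x.1, x.2.1, sInf x.2.2.1))
  · apply Set.Finite.subset
      ((Set.finite_Iic M).prod ((Set.finite_Iic M).prod (Set.finite_Iic M)))
    rintro ⟨i, j, k⟩ ⟨x, hx, hxe⟩
    simp only [Prod.mk.injEq] at hxe
    obtain ⟨h1, h2, h3⟩ := hxe
    simp only [Set.mem_prod, Set.mem_Iic]
    exact ⟨h1 ▸ hx.1, h2 ▸ hx.2.1, h3 ▸ hx.2.2⟩
  · intro x _ y _ hxy
    simp only [Prod.mk.injEq] at hxy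
    obtain ⟨h1, h2, h3⟩ := hxy
    have hs : x.2.2.1 = y.2.2.1 := by
      rw [eqIci_aux _ (hne _ x.2.2.2) (hind _ x.2.2.2),
        eqIci_aux _ (hne _ y.2.2.2) (hind _ y.2.2.2), h3]
    exact Prod.ext_iff.mpr ⟨h1, Prod.ext_iff.mpr ⟨h2, Subtype.ext hs⟩⟩

/-- Proposition 2.2: for an ω-closed family `𝓕` of nonempty inductive subsets of `ω`,
for all `a, b ∈ B_ω^𝓕` the sets `{x : a·x = b}` and `{x : x·a = b}` are finite. -/
theorem statement1 (𝓕 : Set (Set ℕ)) (hcl : OmegaClosed 𝓕)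
    (hne : ∀ F ∈ 𝓕, F.Nonempty) (hind : ∀ F ∈ 𝓕, InductiveSet F) (a b : BF 𝓕) :
    {x : BF 𝓕 | BFmul hcl a x = b}.Finite ∧ {x : BF 𝓕 | BFmul hcl x a = b}.Finite := by
  set M : ℕ := b.1 + b.2.1 + a.1 + a.2.1 + sInf b.2.2.1 with hM
  have hGm : sInf b.2.2.1 ∈ b.2.2.1 := Nat.sInf_mem (hne _ b.2.2.2)
  constructor
  · apply (BF_bounded_finite 𝓕 hne hind M).subset
    intro x hx
    simp only [Set.mem_setOf_eq] at hx ⊢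
    unfold BFmul at hx
    split_ifs at hx with h
    · rw [Prod.ext_iff, Prod.ext_iff] at hx
      obtain ⟨h1, h2, h3'⟩ := hx
      have h3 := congrArg Subtype.val h3'
      have hmem : sInf b.2.2.1 ∈ x.2.2.1 :=
        ((Set.ext_iff.mp h3 (sInf b.2.2.1)).mpr hGm).2
      exact ⟨by simp at h1 h2; omega, by simp at h1 h2; omega,
        le_trans (Nat.sInf_le hmem) (by omega)⟩
    · rw [Prod.ext_iff, Prod.ext_iff] at hx
      obtain ⟨h1, h2, h3'⟩ := hx
      have h3 := congrArg Subtype.val h3'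
      have hmem : sInf b.2.2.1 + (a.2.1 - x.1) ∈ x.2.2.1 :=
        ((Set.ext_iff.mp h3 (sInf b.2.2.1)).mpr hGm).2
      exact ⟨by simp at h1 h2; omega, by simp at h1 h2; omega,
        le_trans (Nat.sInf_le hmem) (by omega)⟩
  · apply (BF_bounded_finite 𝓕 hne hind M).subset
    intro x hx
    simp only [Set.mem_setOf_eq] at hx ⊢
    unfold BFmul at hx
    split_ifs at hx with h
    · rw [Prod.ext_iff, Prod.ext_iff] at hx
      obtain ⟨h1, h2, h3'⟩ := hx
      have h3 := congrArg Subtype.val h3'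
      have hmem : sInf b.2.2.1 + (a.1 - x.2.1) ∈ x.2.2.1 :=
        ((Set.ext_iff.mp h3 (sInf b.2.2.1)).mpr hGm).1
      exact ⟨by simp at h1 h2; omega, by simp at h1 h2; omega,
        le_trans (Nat.sInf_le hmem) (by omega)⟩
    · rw [Prod.ext_iff, Prod.ext_iff] at hx
      obtain ⟨h1, h2, h3'⟩ := hx
      have h3 := congrArg Subtype.val h3'
      have hmem : sInf b.2.2.1 ∈ x.2.2.1 :=
        ((Set.ext_iff.mp h3 (sInf b.2.2.1)).mpr hGm).1
      exact ⟨by simp at h1 h2; omega, by simp at h1 h2; omega,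
        le_trans (Nat.sInf_le hmem) (by omega)⟩
end

section
/- Let 𝓕 be an ω-closed family of nonempty inductive subsets of ω. Then every Hausdorff shift-continuous topology τ on the semigroup B_ω^𝓕 is the discrete topology. -/
private lemma BFext {𝓕 : Set (Set ℕ)} {x y : BF 𝓕} (h1 : x.1 = y.1) (h2 : x.2.1 = y.2.1)
    (h3 : x.2.2.1 = y.2.2.1) : x = y :=
  Prod.ext h1 (Prod.ext h2 (Subtype.ext h3))

/-- Theorem 2.3: every Hausdorff shift-continuous topology on `B_ω^𝓕`, for an
ω-closed family `𝓕` of nonempty inductive subsets of `ω`, is discrete. -/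
theorem statement2 (𝓕 : Set (Set ℕ)) (hcl : OmegaClosed 𝓕)
    (hne : ∀ F ∈ 𝓕, F.Nonempty) (hind : ∀ F ∈ 𝓕, InductiveSet F)
    (τ : TopologicalSpace (BF 𝓕)) (hT2 : @T2Space _ τ)
    (hsc : ∀ a : BF 𝓕, @Continuous _ _ τ τ (fun x => BFmul hcl a x) ∧
        @Continuous _ _ τ τ (fun x => BFmul hcl x a)) :
    τ = ⊥ := by
  letI := τ
  haveI := hT2
  have hstep : ∀ F ∈ 𝓕, ∀ d : ℕ, sInf F + d ∈ F := by
    intro F hF d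
    induction d with
    | zero => exact Nat.sInf_mem (hne F hF)
    | succ n ih => exact hind F hF _ ih
  have htail : ∀ F ∈ 𝓕, ∀ n : ℕ, sInf F ≤ n → n ∈ F := by
    intro F hF n hn
    have h := hstep F hF (n - sInf F)
    rwa [Nat.add_sub_cancel' hn] at h
  have hFeq : ∀ F ∈ 𝓕, ∀ G ∈ 𝓕, sInf F = sInf G → F = G := by
    intro F hF G hG h
    ext n
    constructor
    · intro hn
      exact htail G hG n (by rw [← h]; exact Nat.sInf_le hn)
    · intro hn
      exact htail F hF n (by rw [h]; exact Nat.sInf_le hn)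
  have hopenL : ∀ u v : BF 𝓕, IsOpen {x : BF 𝓕 | BFmul hcl u x ≠ BFmul hcl v x} := by
    intro u v
    have hc : IsClosed {x : BF 𝓕 | BFmul hcl u x = BFmul hcl v x} :=
      isClosed_eq (hsc u).1 (hsc v).1
    simpa [Set.compl_setOf] using hc.isOpen_compl
  have hopenR : ∀ u v : BF 𝓕, IsOpen {x : BF 𝓕 | BFmul hcl x u ≠ BFmul hcl x v} := by
    intro u v
    have hc : IsClosed {x : BF 𝓕 | BFmul hcl x u = BFmul hcl x v} :=
      isClosed_eq (hsc u).2 (hsc v).2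
    simpa [Set.compl_setOf] using hc.isOpen_compl
  apply eq_bot_of_singletons_open
  rintro ⟨i, j, Fp, hFp⟩
  set m := sInf Fp with hm
  have hSne : Set.Nonempty ((fun F => sInf F) '' 𝓕) := ⟨m, Fp, hFp, hm.symm⟩
  set α := sInf ((fun F => sInf F) '' 𝓕) with hαdef
  obtain ⟨F₀, hF₀, hF₀α⟩ := Nat.sInf_mem hSne
  replace hF₀α : sInf F₀ = α := hF₀α
  have hαle : ∀ F ∈ 𝓕, α ≤ sInf F := fun F hF => Nat.sInf_le ⟨F, hF, rfl⟩
  have hsub : ∀ F ∈ 𝓕, ∀ d : ℕ, F ⊆ wShift d F₀ := by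
    intro F hF d y hy
    have h1 : sInf F ≤ y := Nat.sInf_le hy
    have h2 : α ≤ sInf F := hαle F hF
    show y + d ∈ F₀
    exact htail F₀ hF₀ (y + d) (by rw [hF₀α]; omega)
  have habsorb : ∀ F ∈ 𝓕, ∀ dd : ℕ, wShift dd F₀ ∩ F = F :=
    fun F hF dd => Set.inter_eq_right.mpr (hsub F hF dd)
  have habsorb' : ∀ F ∈ 𝓕, ∀ dd : ℕ, F ∩ wShift dd F₀ = F :=
    fun F hF dd => Set.inter_eq_left.mpr (hsub F hF dd)
  have key : ∃ (U : Set (BF 𝓕)) (C : ℕ), IsOpen U ∧ (i, j, ⟨Fp, hFp⟩) ∈ U ∧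
      ∀ x ∈ U, x.1 ≤ i ∧ x.2.1 ≤ j ∧ sInf x.2.2.1 < C := by
    -- pair A : left multiplications detecting x.1 ≤ i
    have hA_eq : ∀ x : BF 𝓕, i + 1 ≤ x.1 →
        BFmul hcl (1, i+1, ⟨F₀, hF₀⟩) x = BFmul hcl (0, i, ⟨F₀, hF₀⟩) x := by
      rintro ⟨k, l, Fx, hFx⟩ hk
      have hk' : i + 1 ≤ k := hk
      simp only [BFmul]
      rw [if_pos (show i + 1 ≤ k from hk'), if_pos (show i ≤ k by omega)]
      refine BFext (show 1 + (k - (i+1)) = 0 + (k - i) by omega) rfl ?_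
      show wShift (k - (i+1)) F₀ ∩ Fx = wShift (k - i) F₀ ∩ Fx
      rw [habsorb Fx hFx, habsorb Fx hFx]
    have hA_ne : BFmul hcl (1, i+1, ⟨F₀, hF₀⟩) (i, j, ⟨Fp, hFp⟩) ≠
        BFmul hcl (0, i, ⟨F₀, hF₀⟩) (i, j, ⟨Fp, hFp⟩) := by
      intro h
      have h1 := congrArg Prod.fst h
      simp only [BFmul] at h1
      rw [if_neg (show ¬ (i + 1 ≤ i) by omega), if_pos (le_refl i)] at h1
      simp at h1
    -- pair B : right multiplications detecting x.2.1 ≤ j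
    have hB_eq : ∀ x : BF 𝓕, j + 1 ≤ x.2.1 →
        BFmul hcl x (j+1, 1, ⟨F₀, hF₀⟩) = BFmul hcl x (j, 0, ⟨F₀, hF₀⟩) := by
      rintro ⟨k, l, Fx, hFx⟩ hl
      have hl' : j + 1 ≤ l := hl
      simp only [BFmul]
      rcases eq_or_lt_of_le hl' with h | h
      · rw [if_pos (show l ≤ j + 1 by omega), if_neg (show ¬ (l ≤ j) by omega)]
        refine BFext (show k + (j + 1 - l) = k by omega)
          (show (1 : ℕ) = 0 + (l - j) by omega) ?_
        show wShift (j + 1 - l) Fx ∩ F₀ = Fx ∩ wShift (l - j) F₀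
        have e1 : j + 1 - l = 0 := by omega
        have e2 : l - j = 1 := by omega
        rw [e1, e2]
        ext y
        simp only [wShift, Set.mem_inter_iff, Set.mem_setOf_eq, Nat.add_zero]
        constructor
        · rintro ⟨hy, -⟩
          exact ⟨hy, hsub Fx hFx 1 hy⟩
        · rintro ⟨hy, -⟩
          refine ⟨hy, ?_⟩
          have h1 := hsub Fx hFx 0 hy
          simpa [wShift] using h1
      · rw [if_neg (show ¬ (l ≤ j + 1) by omega), if_neg (show ¬ (l ≤ j) by omega)]
        refine BFext rfl (show 1 + (l - (j+1)) = 0 + (l - j) by omega) ?_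
        show Fx ∩ wShift (l - (j+1)) F₀ = Fx ∩ wShift (l - j) F₀
        rw [habsorb' Fx hFx, habsorb' Fx hFx]
    have hB_ne : BFmul hcl (i, j, ⟨Fp, hFp⟩) (j+1, 1, ⟨F₀, hF₀⟩) ≠
        BFmul hcl (i, j, ⟨Fp, hFp⟩) (j, 0, ⟨F₀, hF₀⟩) := by
      intro h
      have h1 := congrArg (fun z : BF 𝓕 => z.2.1) h
      simp only [BFmul] at h1
      rw [if_pos (show j ≤ j + 1 by omega), if_pos (le_refl j)] at h1
      simp at h1
    by_cases hS : ∃ F₁, F₁ ∈ 𝓕 ∧ ∃ F₂, F₂ ∈ 𝓕 ∧ sInf F₁ < sInf F₂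
    · obtain ⟨Fu, hFu, Fv, hFv, hlt⟩ := hS
      set μ := sInf Fu with hμ
      set ν := sInf Fv with hν
      set t₂ := m + i + 1 with ht₂
      have hC_eq : ∀ x : BF 𝓕, ν + t₂ ≤ sInf x.2.2.1 →
          BFmul hcl (0, t₂, ⟨Fu, hFu⟩) x = BFmul hcl (0, t₂, ⟨Fv, hFv⟩) x := by
        rintro ⟨k, l, Fx, hFx⟩ hbig
        have hbig' : ν + t₂ ≤ sInf Fx := hbig
        simp only [BFmul]
        by_cases hk : t₂ ≤ k
        · rw [if_pos (show t₂ ≤ k from hk), if_pos (show t₂ ≤ k from hk)]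
          refine BFext rfl rfl ?_
          show wShift (k - t₂) Fu ∩ Fx = wShift (k - t₂) Fv ∩ Fx
          have e1 : wShift (k - t₂) Fu ∩ Fx = Fx := by
            refine Set.inter_eq_right.mpr ?_
            intro y hy
            have h1 : sInf Fx ≤ y := Nat.sInf_le hy
            show y + (k - t₂) ∈ Fu
            exact htail Fu hFu _ (by omega)
          have e2 : wShift (k - t₂) Fv ∩ Fx = Fx := by
            refine Set.inter_eq_right.mpr ?_
            intro y hy
            have h1 : sInf Fx ≤ y := Nat.sInf_le hy
            show y + (k - t₂) ∈ Fv
            exact htail Fv hFv _ (by omega)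
          rw [e1, e2]
        · rw [if_neg (show ¬ (t₂ ≤ k) from hk), if_neg (show ¬ (t₂ ≤ k) from hk)]
          refine BFext rfl rfl ?_
          show Fu ∩ wShift (t₂ - k) Fx = Fv ∩ wShift (t₂ - k) Fx
          have hW : ∀ y ∈ wShift (t₂ - k) Fx, ν ≤ y := by
            intro y hy
            have h1 : sInf Fx ≤ y + (t₂ - k) := Nat.sInf_le hy
            omega
          have e1 : Fu ∩ wShift (t₂ - k) Fx = wShift (t₂ - k) Fx :=
            Set.inter_eq_right.mpr (fun y hy => htail Fu hFu y (by have := hW y hy; omega))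
          have e2 : Fv ∩ wShift (t₂ - k) Fx = wShift (t₂ - k) Fx :=
            Set.inter_eq_right.mpr (fun y hy => htail Fv hFv y (by have := hW y hy; omega))
          rw [e1, e2]
      have hC_ne : BFmul hcl (0, t₂, ⟨Fu, hFu⟩) (i, j, ⟨Fp, hFp⟩) ≠
          BFmul hcl (0, t₂, ⟨Fv, hFv⟩) (i, j, ⟨Fp, hFp⟩) := by
        intro h
        have h1 := congrArg (fun z : BF 𝓕 => z.2.2.1) h
        simp only [BFmul] at h1
        rw [if_neg (show ¬ (t₂ ≤ i) by omega), if_neg (show ¬ (t₂ ≤ i) by omega)] at h1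
        simp only at h1
        have hμmem : μ ∈ Fu ∩ wShift (t₂ - i) Fp := by
          constructor
          · exact Nat.sInf_mem (hne Fu hFu)
          · show μ + (t₂ - i) ∈ Fp
            exact htail Fp hFp _ (by omega)
        rw [h1] at hμmem
        have : sInf Fv ≤ μ := Nat.sInf_le hμmem.1
        omega
      refine ⟨{x | BFmul hcl (1, i+1, ⟨F₀, hF₀⟩) x ≠ BFmul hcl (0, i, ⟨F₀, hF₀⟩) x} ∩
          ({x | BFmul hcl x (j+1, 1, ⟨F₀, hF₀⟩) ≠ BFmul hcl x (j, 0, ⟨F₀, hF₀⟩)} ∩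
           {x | BFmul hcl (0, t₂, ⟨Fu, hFu⟩) x ≠ BFmul hcl (0, t₂, ⟨Fv, hFv⟩) x}),
          ν + t₂, (hopenL _ _).inter ((hopenR _ _).inter (hopenL _ _)),
          ⟨hA_ne, hB_ne, hC_ne⟩, ?_⟩
      rintro x ⟨hx1, hx2, hx3⟩
      refine ⟨?_, ?_, ?_⟩
      · by_contra hcon
        exact hx1 (hA_eq x (by omega))
      · by_contra hcon
        exact hx2 (hB_eq x (by omega))
      · by_contra hcon
        exact hx3 (hC_eq x (by omega))
    · push_neg at hS
      have hall : ∀ F ∈ 𝓕, sInf F = m := by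
        intro F hF
        have h1 := hS F hF Fp hFp
        have h2 := hS Fp hFp F hF
        omega
      refine ⟨{x | BFmul hcl (1, i+1, ⟨F₀, hF₀⟩) x ≠ BFmul hcl (0, i, ⟨F₀, hF₀⟩) x} ∩
          {x | BFmul hcl x (j+1, 1, ⟨F₀, hF₀⟩) ≠ BFmul hcl x (j, 0, ⟨F₀, hF₀⟩)},
          m + 1, (hopenL _ _).inter (hopenR _ _), ⟨hA_ne, hB_ne⟩, ?_⟩
      rintro x ⟨hx1, hx2⟩
      refine ⟨?_, ?_, ?_⟩
      · by_contra hcon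
        exact hx1 (hA_eq x (by omega))
      · by_contra hcon
        exact hx2 (hB_eq x (by omega))
      · rw [hall x.2.2.1 x.2.2.2]
        omega
  obtain ⟨U, C, hUopen, hpU, hUsub⟩ := key
  have hinj : Function.Injective (fun x : BF 𝓕 => (x.1, x.2.1, sInf x.2.2.1)) := by
    rintro ⟨x1, x2, Fx, hFx⟩ ⟨y1, y2, Fy, hFy⟩ h
    simp only [Prod.mk.injEq] at h
    obtain ⟨h1, h2, h3⟩ := h
    subst h1; subst h2
    have hxy : Fx = Fy := hFeq Fx hFx Fy hFy h3
    subst hxy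
    rfl
  have hfin : U.Finite := by
    have hsubU : U ⊆ (fun x : BF 𝓕 => (x.1, x.2.1, sInf x.2.2.1)) ⁻¹'
        (Set.Iic i ×ˢ Set.Iic j ×ˢ Set.Iio C) := by
      intro x hx
      obtain ⟨h1, h2, h3⟩ := hUsub x hx
      exact ⟨h1, h2, h3⟩
    exact Set.Finite.subset
      (Set.Finite.preimage hinj.injOn
        ((Set.finite_Iic i).prod ((Set.finite_Iic j).prod (Set.finite_Iio C)))) hsubU
  have hclosed : IsClosed (U \ {((i, j, ⟨Fp, hFp⟩) : BF 𝓕)}) := hfin.diff.isClosed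
  have hsingle : ({((i, j, ⟨Fp, hFp⟩) : BF 𝓕)} : Set (BF 𝓕)) =
      U \ (U \ {((i, j, ⟨Fp, hFp⟩) : BF 𝓕)}) :=
    (Set.diff_diff_cancel_left (Set.singleton_subset_iff.mpr hpU)).symm
  rw [hsingle]
  exact hUopen.sdiff hclosed
end

section
/- Let 𝓕 be an ω-closed family of nonempty inductive subsets of ω with [0) ∈ 𝓕 and [1) ∈ 𝓕. Then in the semigroup B = B_ω^𝓕 the equality ((0,0,[1))·B) ∪ (B·(0,0,[1))) = B \ {(0,0,[0))} holds, where (0,0,[1))·B = {(0,0,[1))·x : x ∈ B} and B·(0,0,[1)) = {x·(0,0,[1)) : x ∈ B}. -/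
/-- Equality (2.1): `((0,0,[1))·B) ∪ (B·(0,0,[1))) = B \ {(0,0,[0))}` in `B = B_ω^𝓕`,
where `[k)` denotes `{k, k+1, …} = Set.Ici k`. -/
theorem statement3 (𝓕 : Set (Set ℕ)) (hcl : OmegaClosed 𝓕)
    (hne : ∀ F ∈ 𝓕, F.Nonempty) (hind : ∀ F ∈ 𝓕, InductiveSet F)
    (h0 : Set.Ici 0 ∈ 𝓕) (h1 : Set.Ici 1 ∈ 𝓕) :
    Set.range (fun x => BFmul hcl (0, 0, ⟨Set.Ici 1, h1⟩) x) ∪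
      Set.range (fun x => BFmul hcl x (0, 0, ⟨Set.Ici 1, h1⟩)) =
      {((0, 0, ⟨Set.Ici 0, h0⟩) : BF 𝓕)}ᶜ := by

  ext ⟨i, j, F, hF⟩
  simp only [Set.mem_union, Set.mem_range, Set.mem_compl_iff, Set.mem_singleton_iff]
  constructor
  · rintro (⟨⟨a, b, G, hG⟩, hx⟩ | ⟨⟨a, b, G, hG⟩, hx⟩) heq
    · rw [heq] at hx
      simp only [BFmul, Nat.zero_le, if_true] at hx
      rw [Prod.ext_iff, Prod.ext_iff, Subtype.ext_iff] at hx
      obtain ⟨hx1, hx2, hx3⟩ := hx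
      dsimp only at hx1 hx2 hx3
      have h0mem : (0 : ℕ) ∈ Set.Ici 0 := Set.mem_Ici.mpr (le_refl 0)
      rw [← hx3] at h0mem
      have := h0mem.1
      simp only [wShift, Set.mem_setOf_eq, Set.mem_Ici] at this
      simp at hx1; omega
    · rw [heq] at hx
      rw [BFmul] at hx
      split_ifs at hx with hb
      · rw [Prod.ext_iff, Prod.ext_iff, Subtype.ext_iff] at hx
        obtain ⟨hy1, hy2, hy3⟩ := hx
        dsimp only at hy1 hy2 hy3
        have h0mem : (0 : ℕ) ∈ Set.Ici 0 := Set.mem_Ici.mpr (le_refl 0)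
        rw [← hy3] at h0mem
        have := h0mem.2
        simp at this
      · rw [Prod.ext_iff, Prod.ext_iff] at hx
        have := hx.2.1
        simp at this hb; omega
  · intro heq
    rcases Nat.eq_zero_or_pos j with hj | hj
    · rcases Nat.eq_zero_or_pos i with hi | hi
      · subst hi hj
        have hFne : F ≠ Set.Ici 0 := by
          intro h
          exact heq (by simp [Prod.ext_iff, Subtype.ext_iff, h])
        have h0F : (0 : ℕ) ∉ F := by
          intro h0F
          apply hFne
          ext n
          simp only [Set.mem_Ici, Nat.zero_le, iff_true]
          exact Nat.rec h0F (fun k hk => hind F hF k hk) n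
        have hsub : F ⊆ Set.Ici 1 := by
          intro n hn
          rcases Nat.eq_zero_or_pos n with h | h
          · exact absurd (h ▸ hn) h0F
          · exact h
        left
        refine ⟨(0, 0, ⟨F, hF⟩), ?_⟩
        simp only [BFmul, Nat.zero_le, if_true]
        refine Prod.ext (by simp) (Prod.ext (by simp) (Subtype.ext ?_))
        ext n
        simp only [wShift, Set.mem_inter_iff, Set.mem_setOf_eq]
        constructor
        · exact fun h => h.2
        · intro h; exact ⟨by simpa using hsub h, h⟩
      · subst hj
        left
        refine ⟨(i, 0, ⟨F, hF⟩), ?_⟩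
        simp only [BFmul, Nat.zero_le, if_true]
        refine Prod.ext (by simp) (Prod.ext (by simp) (Subtype.ext ?_))
        ext n
        simp only [wShift, Set.mem_inter_iff, Set.mem_setOf_eq, Set.mem_Ici]
        constructor
        · exact fun h => h.2
        · intro h; exact ⟨by omega, h⟩
    · right
      refine ⟨(i, j, ⟨F, hF⟩), ?_⟩
      rw [BFmul]
      rw [if_neg (by simpa using Nat.not_le.mpr hj)]
      refine Prod.ext (by simp) (Prod.ext (by simp) (Subtype.ext ?_))
      ext n
      simp only [wShift, Set.mem_inter_iff, Set.mem_setOf_eq, Set.mem_Ici]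
      constructor
      · exact fun h => h.1
      · intro h; exact ⟨h, by omega⟩
end

section
/- Let 𝓕 be an ω-closed family of nonempty inductive subsets of ω, and let S be a Hausdorff semitopological semigroup containing B_ω^𝓕 as a proper dense subsemigroup, i.e., there is an injective multiplication-preserving map φ : B_ω^𝓕 → S whose image is dense in S and not equal to S. Then I = S \ φ(B_ω^𝓕) is a closed two-sided ideal of S (I is closed in S, and x·y ∈ I whenever x ∈ I or y ∈ I). -/
namespace BFAux

variable {𝓕 : Set (Set ℕ)}

lemma family_eq_Ici (hne : ∀ F ∈ 𝓕, F.Nonempty) (hind : ∀ F ∈ 𝓕, InductiveSet F)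
    {F : Set ℕ} (hF : F ∈ 𝓕) : F = Set.Ici (sInf F) := by
  ext n
  simp only [Set.mem_Ici]
  constructor
  · exact fun h => Nat.sInf_le h
  · intro h
    exact Nat.le_induction (Nat.sInf_mem (hne F hF)) (fun n _ ih => hind F hF n ih) n h

lemma sInf_Ici (a : ℕ) : sInf (Set.Ici a) = a :=
  le_antisymm (Nat.sInf_le (le_refl a)) (Nat.sInf_mem ⟨a, le_refl a⟩)

lemma wShift_Ici (n a : ℕ) : wShift n (Set.Ici a) = Set.Ici (a - n) := by
  ext x
  simp only [wShift, Set.mem_setOf_eq, Set.mem_Ici]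
  omega

/-- The minimum of the third component. -/
noncomputable def mval (x : BF 𝓕) : ℕ := sInf x.2.2.1

lemma BF_ext (hne : ∀ F ∈ 𝓕, F.Nonempty) (hind : ∀ F ∈ 𝓕, InductiveSet F)
    {x y : BF 𝓕} (h1 : x.1 = y.1) (h2 : x.2.1 = y.2.1) (h3 : mval x = mval y) : x = y := by
  obtain ⟨p, q, F, hF⟩ := x
  obtain ⟨p', q', F', hF'⟩ := y
  simp only [mval] at h1 h2 h3
  subst h1; subst h2
  have : F = F' := by
    rw [family_eq_Ici hne hind hF, family_eq_Ici hne hind hF']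
    rw [h3]
  subst this
  rfl

lemma mul_fst (hcl : OmegaClosed 𝓕) (x y : BF 𝓕) :
    (BFmul hcl x y).1 = x.1 + (y.1 - x.2.1) := by
  unfold BFmul; split
  · rfl
  · next h => simp only; omega

lemma mul_snd (hcl : OmegaClosed 𝓕) (x y : BF 𝓕) :
    (BFmul hcl x y).2.1 = y.2.1 + (x.2.1 - y.1) := by
  unfold BFmul; split
  · next h => simp only; omega
  · rfl

lemma sInf_shift_inter (hne : ∀ F ∈ 𝓕, F.Nonempty) (hind : ∀ F ∈ 𝓕, InductiveSet F)
    {F G : Set ℕ} (hF : F ∈ 𝓕) (hG : G ∈ 𝓕) (n : ℕ) :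
    sInf (wShift n F ∩ G) = max (sInf F - n) (sInf G) := by
  conv_lhs => rw [family_eq_Ici hne hind hF, family_eq_Ici hne hind hG]
  rw [wShift_Ici, Set.Ici_inter_Ici, sInf_Ici]

lemma sInf_inter_shift (hne : ∀ F ∈ 𝓕, F.Nonempty) (hind : ∀ F ∈ 𝓕, InductiveSet F)
    {F G : Set ℕ} (hF : F ∈ 𝓕) (hG : G ∈ 𝓕) (n : ℕ) :
    sInf (F ∩ wShift n G) = max (sInf F) (sInf G - n) := by
  conv_lhs => rw [family_eq_Ici hne hind hF, family_eq_Ici hne hind hG]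
  rw [wShift_Ici, Set.Ici_inter_Ici, sInf_Ici]

lemma mul_mval (hcl : OmegaClosed 𝓕) (hne : ∀ F ∈ 𝓕, F.Nonempty)
    (hind : ∀ F ∈ 𝓕, InductiveSet F) (x y : BF 𝓕) :
    mval (BFmul hcl x y) = max (mval x - (y.1 - x.2.1)) (mval y - (x.2.1 - y.1)) := by
  unfold BFmul mval
  split
  · next h =>
    simp only
    rw [sInf_shift_inter hne hind x.2.2.2 y.2.2.2]
    have : x.2.1 - y.1 = 0 := by omega
    rw [this, Nat.sub_zero]
  · next h =>
    simp only
    rw [sInf_inter_shift hne hind x.2.2.2 y.2.2.2]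
    have : y.1 - x.2.1 = 0 := by omega
    rw [this, Nat.sub_zero]

end BFAux

namespace BFAux

variable {𝓕 : Set (Set ℕ)}

lemma fin_of_bounds (hne : ∀ F ∈ 𝓕, F.Nonempty) (hind : ∀ F ∈ 𝓕, InductiveSet F)
    {A : Set (BF 𝓕)} (B1 B2 B3 : ℕ)
    (h : ∀ x ∈ A, x.1 ≤ B1 ∧ x.2.1 ≤ B2 ∧ mval x ≤ B3) : A.Finite := by
  have hinj' : Set.InjOn (fun x : BF 𝓕 => (x.1, x.2.1, mval x)) A := by
    intro x _ y _ hxy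
    simp only [Prod.mk.injEq] at hxy
    exact BF_ext hne hind hxy.1 hxy.2.1 hxy.2.2
  apply Set.Finite.of_finite_image _ hinj'
  apply Set.Finite.subset
    (((Set.finite_Iic B1).prod ((Set.finite_Iic B2).prod (Set.finite_Iic B3))))
  rintro _ ⟨x, hxA, rfl⟩
  obtain ⟨hb1, hb2, hb3⟩ := h x hxA
  exact ⟨hb1, hb2, hb3⟩

lemma finR (hcl : OmegaClosed 𝓕) (hne : ∀ F ∈ 𝓕, F.Nonempty)
    (hind : ∀ F ∈ 𝓕, InductiveSet F) (b d : BF 𝓕) :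
    {x : BF 𝓕 | BFmul hcl x b = d}.Finite := by
  apply fin_of_bounds hne hind d.1 (b.1 + d.2.1) (mval d + b.1)
  intro x hx
  simp only [Set.mem_setOf_eq] at hx
  have e1 : x.1 + (b.1 - x.2.1) = d.1 := by rw [← mul_fst hcl x b, hx]
  have e2 : b.2.1 + (x.2.1 - b.1) = d.2.1 := by rw [← mul_snd hcl x b, hx]
  have e3 : max (mval x - (b.1 - x.2.1)) (mval b - (x.2.1 - b.1)) = mval d := by
    rw [← mul_mval hcl hne hind x b, hx]
  have e4 : mval x - (b.1 - x.2.1) ≤ mval d := e3 ▸ le_max_left _ _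
  omega

lemma finL (hcl : OmegaClosed 𝓕) (hne : ∀ F ∈ 𝓕, F.Nonempty)
    (hind : ∀ F ∈ 𝓕, InductiveSet F) (b d : BF 𝓕) :
    {x : BF 𝓕 | BFmul hcl b x = d}.Finite := by
  apply fin_of_bounds hne hind (d.1 + b.2.1) d.2.1 (mval d + b.2.1)
  intro x hx
  simp only [Set.mem_setOf_eq] at hx
  have e1 : b.1 + (x.1 - b.2.1) = d.1 := by rw [← mul_fst hcl b x, hx]
  have e2 : x.2.1 + (b.2.1 - x.1) = d.2.1 := by rw [← mul_snd hcl b x, hx]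
  have e3 : max (mval b - (x.1 - b.2.1)) (mval x - (b.2.1 - x.1)) = mval d := by
    rw [← mul_mval hcl hne hind b x, hx]
  have e4 : mval x - (b.2.1 - x.1) ≤ mval d := e3 ▸ le_max_right _ _
  omega

end BFAux

namespace BFAux

open Filter Topology

variable {𝓕 : Set (Set ℕ)}

/-- Core lemma: there is no ultrafilter on `S` converging to a point of the image of `φ`
which contains the range of `φ` but no singleton of the range. -/
lemma core (hcl : OmegaClosed 𝓕) (hne : ∀ F ∈ 𝓕, F.Nonempty)
    (hind : ∀ F ∈ 𝓕, InductiveSet F)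
    {S : Type*} [Semigroup S] [TopologicalSpace S] [T2Space S]
    (hsc : ∀ a : S, Continuous (fun x => a * x) ∧ Continuous (fun x => x * a))
    (φ : BF 𝓕 → S) (hφmul : ∀ x y : BF 𝓕, φ (BFmul hcl x y) = φ x * φ y)
    (hinj : Function.Injective φ)
    (G : Ultrafilter S) (c : BF 𝓕) (hGc : (G : Filter S) ≤ 𝓝 (φ c))
    (hrange : Set.range φ ∈ G) (hsing : ∀ x : BF 𝓕, {φ x} ∉ G) : False := by
  -- fixed-point transfer lemmas
  have hfixR : ∀ (w : BF 𝓕) (A : Set (BF 𝓕)), φ '' A ∈ G →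
      (∀ x ∈ A, BFmul hcl x w = x) → BFmul hcl c w = c := by
    intro w A hAG hAfix
    have hcont : Continuous (fun z : S => z * φ w) := (hsc (φ w)).2
    have hid : Tendsto (fun z : S => z) (G : Filter S) (𝓝 (φ c)) := hGc
    have h1 : Tendsto (fun z : S => z * φ w) (G : Filter S) (𝓝 (φ c * φ w)) :=
      (hcont.tendsto (φ c)).comp hid
    have heq : (fun z : S => z) =ᶠ[(G : Filter S)] (fun z : S => z * φ w) := by
      filter_upwards [hAG] with z hz
      obtain ⟨x, hxA, rfl⟩ := hz
      rw [← hφmul, hAfix x hxA]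
    have h2 : Tendsto (fun z : S => z * φ w) (G : Filter S) (𝓝 (φ c)) :=
      hid.congr' heq
    have := tendsto_nhds_unique h1 h2
    exact hinj (by rw [hφmul]; exact this)
  have hfixL : ∀ (w : BF 𝓕) (A : Set (BF 𝓕)), φ '' A ∈ G →
      (∀ x ∈ A, BFmul hcl w x = x) → BFmul hcl w c = c := by
    intro w A hAG hAfix
    have hcont : Continuous (fun z : S => φ w * z) := (hsc (φ w)).1
    have hid : Tendsto (fun z : S => z) (G : Filter S) (𝓝 (φ c)) := hGc
    have h1 : Tendsto (fun z : S => φ w * z) (G : Filter S) (𝓝 (φ w * φ c)) :=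
      (hcont.tendsto (φ c)).comp hid
    have heq : (fun z : S => z) =ᶠ[(G : Filter S)] (fun z : S => φ w * z) := by
      filter_upwards [hAG] with z hz
      obtain ⟨x, hxA, rfl⟩ := hz
      rw [← hφmul, hAfix x hxA]
    have h2 : Tendsto (fun z : S => φ w * z) (G : Filter S) (𝓝 (φ c)) :=
      hid.congr' heq
    have := tendsto_nhds_unique h1 h2
    exact hinj (by rw [hφmul]; exact this)
  -- Case A : second coordinates escape to infinity
  by_cases hA : ∀ t : ℕ, φ '' {x : BF 𝓕 | t ≤ x.2.1} ∈ G
  · have hc : BFmul hcl c (c.2.1 + 1, c.2.1 + 1, c.2.2) = c := by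
      apply hfixR _ {x : BF 𝓕 | (c.2.1 + 1) + mval c ≤ x.2.1} (hA _)
      intro x hx
      simp only [Set.mem_setOf_eq] at hx
      apply BF_ext hne hind
      · rw [mul_fst]; omega
      · rw [mul_snd]; simp only; omega
      · rw [mul_mval hcl hne hind]
        have hmw : mval ((c.2.1 + 1, c.2.1 + 1, c.2.2) : BF 𝓕) = mval c := rfl
        simp only [hmw]
        omega
    have := congrArg (fun z : BF 𝓕 => z.2.1) hc
    rw [mul_snd] at this
    simp only at this
    omega
  push_neg at hA
  obtain ⟨t₀, ht₀⟩ := hA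
  -- get a fixed second coordinate q₀
  have hlt : φ '' {x : BF 𝓕 | x.2.1 < t₀} ∈ G := by
    have hcover : φ '' {x : BF 𝓕 | x.2.1 < t₀} ∪ φ '' {x : BF 𝓕 | t₀ ≤ x.2.1}
        = Set.range φ := by
      rw [← Set.image_union]
      have : {x : BF 𝓕 | x.2.1 < t₀} ∪ {x : BF 𝓕 | t₀ ≤ x.2.1} = Set.univ := by
        ext x; simp [Set.mem_setOf_eq]; omega
      rw [this, Set.image_univ]
    rcases Ultrafilter.union_mem_iff.mp (hcover ▸ hrange) with h | h
    · exact h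
    · exact absurd h ht₀
  have hq : ∃ q₀ : ℕ, φ '' {x : BF 𝓕 | x.2.1 = q₀} ∈ G := by
    have hdecomp : φ '' {x : BF 𝓕 | x.2.1 < t₀}
        = ⋃ q ∈ Set.Iio t₀, φ '' {x : BF 𝓕 | x.2.1 = q} := by
      rw [← Set.image_iUnion₂]
      congr 1
      ext x; simp [Set.mem_setOf_eq]
    rw [hdecomp] at hlt
    obtain ⟨q₀, _, hq₀⟩ := (Ultrafilter.finite_biUnion_mem_iff (Set.finite_Iio t₀)).mp hlt
    exact ⟨q₀, hq₀⟩
  obtain ⟨q₀, hq₀⟩ := hq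
  -- Case B : first coordinates escape to infinity
  by_cases hB : ∀ t : ℕ, φ '' {x : BF 𝓕 | t ≤ x.1} ∈ G
  · have hc : BFmul hcl (c.1 + 1, c.1 + 1, c.2.2) c = c := by
      apply hfixL _ {x : BF 𝓕 | (c.1 + 1) + mval c ≤ x.1} (hB _)
      intro x hx
      simp only [Set.mem_setOf_eq] at hx
      apply BF_ext hne hind
      · rw [mul_fst]; simp only; omega
      · rw [mul_snd]; simp only; omega
      · rw [mul_mval hcl hne hind]
        have hmw : mval ((c.1 + 1, c.1 + 1, c.2.2) : BF 𝓕) = mval c := rfl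
        simp only [hmw]
        omega
    have := congrArg (fun z : BF 𝓕 => z.1) hc
    rw [mul_fst] at this
    simp only at this
    omega
  push_neg at hB
  obtain ⟨s₀, hs₀⟩ := hB
  have hltp : φ '' {x : BF 𝓕 | x.1 < s₀} ∈ G := by
    have hcover : φ '' {x : BF 𝓕 | x.1 < s₀} ∪ φ '' {x : BF 𝓕 | s₀ ≤ x.1}
        = Set.range φ := by
      rw [← Set.image_union]
      have : {x : BF 𝓕 | x.1 < s₀} ∪ {x : BF 𝓕 | s₀ ≤ x.1} = Set.univ := by
        ext x; simp [Set.mem_setOf_eq]; omega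
      rw [this, Set.image_univ]
    rcases Ultrafilter.union_mem_iff.mp (hcover ▸ hrange) with h | h
    · exact h
    · exact absurd h hs₀
  have hp : ∃ p₀ : ℕ, φ '' {x : BF 𝓕 | x.1 = p₀} ∈ G := by
    have hdecomp : φ '' {x : BF 𝓕 | x.1 < s₀}
        = ⋃ p ∈ Set.Iio s₀, φ '' {x : BF 𝓕 | x.1 = p} := by
      rw [← Set.image_iUnion₂]
      congr 1
      ext x; simp [Set.mem_setOf_eq]
    rw [hdecomp] at hltp
    obtain ⟨p₀, _, hp₀⟩ := (Ultrafilter.finite_biUnion_mem_iff (Set.finite_Iio s₀)).mp hltp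
    exact ⟨p₀, hp₀⟩
  obtain ⟨p₀, hp₀⟩ := hp
  -- Case C : third coordinate minima escape to infinity along p = p₀, q = q₀
  have hpq : φ '' {x : BF 𝓕 | x.1 = p₀ ∧ x.2.1 = q₀} ∈ G := by
    have : {x : BF 𝓕 | x.1 = p₀ ∧ x.2.1 = q₀}
        = {x : BF 𝓕 | x.1 = p₀} ∩ {x : BF 𝓕 | x.2.1 = q₀} := by
      ext x; simp [Set.mem_setOf_eq]
    rw [this, Set.image_inter hinj]
    exact G.inter_mem hp₀ hq₀
  have hfinim : ∀ A : Set (BF 𝓕), A.Finite → φ '' A ∉ G := by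
    intro A hAfin hAG
    have : φ '' A = ⋃ x ∈ A, {φ x} := by
      ext z; simp [Set.mem_image, eq_comm]
    rw [this] at hAG
    obtain ⟨x, _, hx⟩ := (Ultrafilter.finite_biUnion_mem_iff hAfin).mp hAG
    exact hsing x hx
  have hbig : ∀ C : ℕ, φ '' {x : BF 𝓕 | x.1 = p₀ ∧ x.2.1 = q₀ ∧ C ≤ mval x} ∈ G := by
    intro C
    have hsplit : {x : BF 𝓕 | x.1 = p₀ ∧ x.2.1 = q₀}
        = {x : BF 𝓕 | x.1 = p₀ ∧ x.2.1 = q₀ ∧ C ≤ mval x}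
          ∪ {x : BF 𝓕 | x.1 = p₀ ∧ x.2.1 = q₀ ∧ mval x < C} := by
      ext x; simp only [Set.mem_setOf_eq, Set.mem_union]; omega
    have hfin : {x : BF 𝓕 | x.1 = p₀ ∧ x.2.1 = q₀ ∧ mval x < C}.Finite := by
      apply fin_of_bounds hne hind p₀ q₀ C
      intro x hx
      simp only [Set.mem_setOf_eq] at hx
      omega
    rw [hsplit, Set.image_union] at hpq
    rcases Ultrafilter.union_mem_iff.mp hpq with h | h
    · exact h
    · exact absurd h (hfinim _ hfin)
  -- pick a witness with huge minimum
  obtain ⟨z, hz⟩ := Ultrafilter.nonempty_of_mem (hbig (mval c + c.2.1 + 1))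
  obtain ⟨x₁, hx₁, rfl⟩ := hz
  obtain ⟨hx₁p, hx₁q, hx₁m⟩ := hx₁
  set M : ℕ := mval x₁ with hM
  have hc : BFmul hcl c (q₀, q₀, x₁.2.2) = c := by
    apply hfixR _ {x : BF 𝓕 | x.1 = p₀ ∧ x.2.1 = q₀ ∧ M ≤ mval x} (hbig M)
    intro x hx
    simp only [Set.mem_setOf_eq] at hx
    obtain ⟨hxp, hxq, hxm⟩ := hx
    apply BF_ext hne hind
    · rw [mul_fst]; simp only; omega
    · rw [mul_snd]; simp only; omega
    · rw [mul_mval hcl hne hind]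
      have hmw : mval ((q₀, q₀, x₁.2.2) : BF 𝓕) = M := rfl
      simp only [hmw]
      omega
  have e1 := congrArg (fun z : BF 𝓕 => z.1) hc
  have e3 := congrArg mval hc
  rw [mul_fst] at e1
  rw [mul_mval hcl hne hind] at e3
  simp only at e1
  have hmw : mval ((q₀, q₀, x₁.2.2) : BF 𝓕) = M := rfl
  rw [hmw] at e3
  have e4 : M - (c.2.1 - q₀) ≤ mval c := e3 ▸ le_max_right _ _
  omega

end BFAux

/-- Proposition 2.4: if a Hausdorff semitopological semigroup `S` contains `B_ω^𝓕`
(for an ω-closed family `𝓕` of nonempty inductive subsets of `ω`) as a proper dense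
subsemigroup, then `I = S \ B_ω^𝓕` is a closed two-sided ideal of `S`. -/
theorem statement4 (𝓕 : Set (Set ℕ)) (hcl : OmegaClosed 𝓕)
    (hne : ∀ F ∈ 𝓕, F.Nonempty) (hind : ∀ F ∈ 𝓕, InductiveSet F)
    {S : Type*} [Semigroup S] [TopologicalSpace S] [T2Space S]
    (hsc : ∀ a : S, Continuous (fun x => a * x) ∧ Continuous (fun x => x * a))
    (φ : BF 𝓕 → S) (hφmul : ∀ x y : BF 𝓕, φ (BFmul hcl x y) = φ x * φ y)
    (hinj : Function.Injective φ) (hdense : Dense (Set.range φ))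
    (hproper : Set.range φ ≠ Set.univ) :
    IsClosed (Set.range φ)ᶜ ∧
      ∀ x y : S, (x ∈ (Set.range φ)ᶜ ∨ y ∈ (Set.range φ)ᶜ) →
        x * y ∈ (Set.range φ)ᶜ := by
  classical
  open Filter Topology BFAux in
  -- the cofinite-image filter
  set L : Filter S := Filter.map φ Filter.cofinite with hL
  have hrangeL : Set.range φ ∈ L := by
    rw [hL, Filter.mem_map]
    simp [Filter.eventually_cofinite]
  have hcompl_single : ∀ x : BF 𝓕, {φ x}ᶜ ∈ L := by
    intro x
    rw [hL, Filter.mem_map, Filter.mem_cofinite]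
    have : (φ ⁻¹' {φ x}ᶜ)ᶜ = {x} := by
      ext y
      simp only [Set.mem_compl_iff, Set.mem_preimage, Set.mem_singleton_iff, not_not]
      exact ⟨fun h => hinj h, fun h => by rw [h]⟩
    rw [this]
    exact Set.finite_singleton x
  have hAmem : ∀ A : Set (BF 𝓕), A.Finite → (Set.range φ \ φ '' A) ∈ L := by
    intro A hAfin
    rw [hL, Filter.mem_map, Filter.mem_cofinite]
    apply Set.Finite.subset hAfin
    intro x hx
    simp only [Set.mem_compl_iff, Set.mem_preimage, Set.mem_diff, Set.mem_range,
      not_and, not_not] at hx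
    exact hinj.mem_set_image.mp (hx ⟨x, rfl⟩)
  -- claim: near any point of the closure of the complement, the filter 𝓝 s ⊓ L is proper
  have hclaim : ∀ s : S, s ∈ closure ((Set.range φ)ᶜ) → ((𝓝 s) ⊓ L).NeBot := by
    intro s hs
    rw [Filter.inf_neBot_iff]
    intro U hU T hT
    rw [hL, Filter.mem_map, Filter.mem_cofinite] at hT
    set E : Set (BF 𝓕) := (φ ⁻¹' T)ᶜ with hE
    obtain ⟨V, hVU, hVopen, hsV⟩ := mem_nhds_iff.mp hU
    obtain ⟨s', hs'V, hs'I⟩ := (mem_closure_iff.mp hs) V hVopen hsV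
    have hEfin : (φ '' E).Finite := hT.image φ
    have hclosed : IsClosed (φ '' E) := hEfin.isClosed
    have hs'notin : s' ∉ φ '' E := by
      rintro ⟨x, _, rfl⟩
      exact hs'I ⟨x, rfl⟩
    have hV'open : IsOpen (V ∩ (φ '' E)ᶜ) := hVopen.inter hclosed.isOpen_compl
    have hV'ne : (V ∩ (φ '' E)ᶜ).Nonempty := ⟨s', hs'V, hs'notin⟩
    obtain ⟨z, hzrange, hzV'⟩ := hdense.exists_mem_open hV'open hV'ne
    obtain ⟨x, rfl⟩ := hzrange
    have hxE : x ∉ E := fun h => hzV'.2 ⟨x, h, rfl⟩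
    have hxT : φ x ∈ T := by
      by_contra h
      exact hxE h
    exact ⟨φ x, hVU hzV'.1, hxT⟩
  -- main step: no point of the closure of the complement lies in the range
  have hkey : ∀ s : S, s ∈ closure ((Set.range φ)ᶜ) → s ∉ Set.range φ := by
    rintro s hs ⟨c, rfl⟩
    haveI := hclaim _ hs
    set G : Ultrafilter S := Ultrafilter.of ((𝓝 (φ c)) ⊓ L) with hG
    have hGle : (G : Filter S) ≤ (𝓝 (φ c)) ⊓ L := Ultrafilter.of_le _
    refine core hcl hne hind hsc φ hφmul hinj G c (hGle.trans inf_le_left) ?_ ?_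
    · exact hGle (Filter.mem_inf_of_right hrangeL)
    · intro x hx
      have h2 : {φ x}ᶜ ∈ G := hGle (Filter.mem_inf_of_right (hcompl_single x))
      have := G.toFilter.inter_mem hx h2
      rw [Set.inter_compl_self] at this
      simpa using Ultrafilter.nonempty_of_mem this
  have hIclosed : IsClosed ((Set.range φ)ᶜ) := by
    apply isClosed_of_closure_subset
    intro s hs
    exact hkey s hs
  -- left multiplication by a range element of a complement-closure element stays outside the range
  have hleft : ∀ (b : BF 𝓕) (s : S), s ∈ closure ((Set.range φ)ᶜ) →
      φ b * s ∉ Set.range φ := by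
    rintro b s hs ⟨c, hc⟩
    haveI := hclaim _ hs
    set G0 : Ultrafilter S := Ultrafilter.of ((𝓝 s) ⊓ L) with hG0
    have hG0le : (G0 : Filter S) ≤ (𝓝 s) ⊓ L := Ultrafilter.of_le _
    set G : Ultrafilter S := G0.map (fun z => φ b * z) with hGdef
    have hGle : (G : Filter S) ≤ 𝓝 (φ b * s) := by
      rw [hGdef, Ultrafilter.coe_map]
      exact ((hsc (φ b)).1.tendsto s).comp (hG0le.trans inf_le_left)
    refine core hcl hne hind hsc φ hφmul hinj G c (hc ▸ hGle) ?_ ?_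
    · rw [hGdef, Ultrafilter.mem_map]
      apply Filter.mem_of_superset (hG0le (Filter.mem_inf_of_right hrangeL))
      rintro z ⟨x, rfl⟩
      exact ⟨BFmul hcl b x, hφmul b x⟩
    · intro d hd
      rw [hGdef, Ultrafilter.mem_map] at hd
      have hAd := hAmem _ (BFAux.finL hcl hne hind b d)
      have hmem := G0.toFilter.inter_mem hd (hG0le (Filter.mem_inf_of_right hAd))
      obtain ⟨z, hz1, hz2⟩ := Filter.nonempty_of_mem hmem
      obtain ⟨⟨x, rfl⟩, hz3⟩ := hz2
      simp only [Set.mem_preimage, Set.mem_singleton_iff] at hz1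
      rw [← hφmul] at hz1
      have : BFmul hcl b x = d := hinj hz1
      exact hz3 ⟨x, this, rfl⟩
  have hright : ∀ (b : BF 𝓕) (s : S), s ∈ closure ((Set.range φ)ᶜ) →
      s * φ b ∉ Set.range φ := by
    rintro b s hs ⟨c, hc⟩
    haveI := hclaim _ hs
    set G0 : Ultrafilter S := Ultrafilter.of ((𝓝 s) ⊓ L) with hG0
    have hG0le : (G0 : Filter S) ≤ (𝓝 s) ⊓ L := Ultrafilter.of_le _
    set G : Ultrafilter S := G0.map (fun z => z * φ b) with hGdef
    have hGle : (G : Filter S) ≤ 𝓝 (s * φ b) := by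
      rw [hGdef, Ultrafilter.coe_map]
      exact ((hsc (φ b)).2.tendsto s).comp (hG0le.trans inf_le_left)
    refine core hcl hne hind hsc φ hφmul hinj G c (hc ▸ hGle) ?_ ?_
    · rw [hGdef, Ultrafilter.mem_map]
      apply Filter.mem_of_superset (hG0le (Filter.mem_inf_of_right hrangeL))
      rintro z ⟨x, rfl⟩
      exact ⟨BFmul hcl x b, hφmul x b⟩
    · intro d hd
      rw [hGdef, Ultrafilter.mem_map] at hd
      have hAd := hAmem _ (BFAux.finR hcl hne hind b d)
      have hmem := G0.toFilter.inter_mem hd (hG0le (Filter.mem_inf_of_right hAd))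
      obtain ⟨z, hz1, hz2⟩ := Filter.nonempty_of_mem hmem
      obtain ⟨⟨x, rfl⟩, hz3⟩ := hz2
      simp only [Set.mem_preimage, Set.mem_singleton_iff] at hz1
      rw [← hφmul] at hz1
      have : BFmul hcl x b = d := hinj hz1
      exact hz3 ⟨x, this, rfl⟩
  refine ⟨hIclosed, ?_⟩
  intro x y hxy
  -- product of two complement elements
  have hII : ∀ s t : S, s ∈ (Set.range φ)ᶜ → t ∈ (Set.range φ)ᶜ →
      s * t ∈ (Set.range φ)ᶜ := by
    intro s t hsI htI
    have hmapsto : Set.range φ ⊆ (fun z => z * t) ⁻¹' ((Set.range φ)ᶜ) := by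
      rintro _ ⟨b, rfl⟩
      exact hleft b t (subset_closure htI)
    have hclosedpre : IsClosed ((fun z => z * t) ⁻¹' ((Set.range φ)ᶜ)) :=
      hIclosed.preimage (hsc t).2
    have huniv : Set.univ ⊆ (fun z => z * t) ⁻¹' ((Set.range φ)ᶜ) := by
      rw [← hdense.closure_eq]
      exact closure_minimal hmapsto hclosedpre
    exact huniv (Set.mem_univ s)
  rcases hxy with hx | hy
  · by_cases hy' : y ∈ Set.range φ
    · obtain ⟨b, rfl⟩ := hy'
      exact hright b x (subset_closure hx)
    · exact hII x y hx hy'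
  · by_cases hx' : x ∈ Set.range φ
    · obtain ⟨b, rfl⟩ := hx'
      exact hleft b y (subset_closure hy)
    · exact hII x y hx' hy
end

section
/- Let 𝓕 be an ω-closed family of nonempty inductive subsets of ω and let S = B_ω^𝓕 ∪ {0} be B_ω^𝓕 with an adjoined zero, equipped with a Hausdorff locally compact shift-continuous topology in which 0 is not an isolated point. If U and V are compact open neighbourhoods of 0 in S, then the set U \ V is finite. -/
/-- `B_ω^𝓕` with an adjoined zero; `none` plays the role of the zero `0`. -/
abbrev BF0 (𝓕 : Set (Set ℕ)) : Type := Option (BF 𝓕)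

/-- The multiplication of the semigroup `B_ω^𝓕` with an adjoined zero. -/
def BF0mul {𝓕 : Set (Set ℕ)} (h : OmegaClosed 𝓕) : BF0 𝓕 → BF0 𝓕 → BF0 𝓕
  | some a, some b => some (BFmul h a b)
  | _, _ => none

lemma wShift_Ici (n s : ℕ) : wShift n (Set.Ici s) = Set.Ici (s - n) := by
  ext x; simp only [wShift, Set.mem_setOf_eq, Set.mem_Ici]; omega

lemma mem_fam_eq_Ici {𝓕 : Set (Set ℕ)} (hne : ∀ F ∈ 𝓕, F.Nonempty)
    (hind : ∀ F ∈ 𝓕, InductiveSet F) {F : Set ℕ} (hF : F ∈ 𝓕) :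
    F = Set.Ici (sInf F) := by
  ext x
  simp only [Set.mem_Ici]
  constructor
  · exact fun hx => Nat.sInf_le hx
  · intro hx
    have h0 : sInf F ∈ F := Nat.sInf_mem (hne F hF)
    have h1 : ∀ d, sInf F + d ∈ F := by
      intro d; induction d with
      | zero => simpa using h0
      | succ n ih =>
        have := hind F hF _ ih
        rwa [Nat.add_assoc] at this
    have := h1 (x - sInf F)
    rwa [Nat.add_sub_cancel' hx] at this

/-- Coequalizer computation for a pair of left translations by `(k,k,P)`, `(k,k,Q)`
with `min Q = min P + 1`. -/
lemma left_coeq {𝓕 : Set (Set ℕ)} (hcl : OmegaClosed 𝓕)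
    {P Q G : Set ℕ} (hP : P ∈ 𝓕) (hQ : Q ∈ 𝓕) (hG : G ∈ 𝓕)
    {p q mg : ℕ} (hPI : P = Set.Ici p) (hQI : Q = Set.Ici q) (hGI : G = Set.Ici mg)
    (hpq : q = p + 1) (k i₂ j₂ : ℕ) :
    BFmul hcl (k, k, ⟨P, hP⟩) (i₂, j₂, ⟨G, hG⟩) =
      BFmul hcl (k, k, ⟨Q, hQ⟩) (i₂, j₂, ⟨G, hG⟩) ↔ q + k ≤ mg + i₂ := by
  subst hPI hQI hGI hpq
  simp only [BFmul, wShift_Ici, Set.Ici_inter_Ici]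
  split_ifs with h <;>
    simp only [Prod.mk.injEq, Subtype.mk.injEq, Set.Ici_inj, true_and, and_true] <;>
    omega

lemma right_coeq {𝓕 : Set (Set ℕ)} (hcl : OmegaClosed 𝓕)
    {P Q G : Set ℕ} (hP : P ∈ 𝓕) (hQ : Q ∈ 𝓕) (hG : G ∈ 𝓕)
    {p q mg : ℕ} (hPI : P = Set.Ici p) (hQI : Q = Set.Ici q) (hGI : G = Set.Ici mg)
    (hpq : q = p + 1) (k i₂ j₂ : ℕ) :
    BFmul hcl (i₂, j₂, ⟨G, hG⟩) (k, k, ⟨P, hP⟩) =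
      BFmul hcl (i₂, j₂, ⟨G, hG⟩) (k, k, ⟨Q, hQ⟩) ↔ q + k ≤ mg + j₂ := by
  subst hPI hQI hGI hpq
  simp only [BFmul, wShift_Ici, Set.Ici_inter_Ici]
  split_ifs with h <;>
    simp only [Prod.mk.injEq, Subtype.mk.injEq, Set.Ici_inj, true_and, and_true] <;>
    omega

/-- Coequalizer computation for a pair of left translations by `(k,k,N)`, `(k+1,k+1,N)`. -/
lemma left_coeq2 {𝓕 : Set (Set ℕ)} (hcl : OmegaClosed 𝓕)
    {N G : Set ℕ} (hN : N ∈ 𝓕) (hG : G ∈ 𝓕) {n mg : ℕ}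
    (hNI : N = Set.Ici n) (hGI : G = Set.Ici mg) (k i₂ j₂ : ℕ) :
    BFmul hcl (k, k, ⟨N, hN⟩) (i₂, j₂, ⟨G, hG⟩) =
      BFmul hcl (k + 1, k + 1, ⟨N, hN⟩) (i₂, j₂, ⟨G, hG⟩) ↔
      (k + 1 ≤ i₂ ∧ n + k + 1 ≤ mg + i₂) := by
  subst hNI hGI
  simp only [BFmul, wShift_Ici, Set.Ici_inter_Ici]
  split_ifs with h1 h2 h2 <;>
    simp only [Prod.mk.injEq, Subtype.mk.injEq, Set.Ici_inj, true_and, and_true] <;>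
    omega

lemma right_coeq2 {𝓕 : Set (Set ℕ)} (hcl : OmegaClosed 𝓕)
    {N G : Set ℕ} (hN : N ∈ 𝓕) (hG : G ∈ 𝓕) {n mg : ℕ}
    (hNI : N = Set.Ici n) (hGI : G = Set.Ici mg) (k i₂ j₂ : ℕ) :
    BFmul hcl (i₂, j₂, ⟨G, hG⟩) (k, k, ⟨N, hN⟩) =
      BFmul hcl (i₂, j₂, ⟨G, hG⟩) (k + 1, k + 1, ⟨N, hN⟩) ↔
      (k + 1 ≤ j₂ ∧ n + k + 1 ≤ mg + j₂) := by
  subst hNI hGI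
  simp only [BFmul, wShift_Ici, Set.Ici_inter_Ici]
  split_ifs with h1 h2 h2 <;>
    simp only [Prod.mk.injEq, Subtype.mk.injEq, Set.Ici_inj, true_and, and_true] <;>
    omega

/-- Every nonzero element of `B_ω^𝓕 ∪ {0}` is isolated in any Hausdorff
shift-continuous topology. -/
lemma isolated_pt {𝓕 : Set (Set ℕ)} (hcl : OmegaClosed 𝓕)
    (hne : ∀ F ∈ 𝓕, F.Nonempty) (hind : ∀ F ∈ 𝓕, InductiveSet F)
    (τ : TopologicalSpace (BF0 𝓕)) (hT2 : @T2Space _ τ)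
    (hsc : ∀ a : BF0 𝓕, @Continuous _ _ τ τ (fun x => BF0mul hcl a x) ∧
        @Continuous _ _ τ τ (fun x => BF0mul hcl x a))
    (a : BF 𝓕) : @IsOpen _ τ {(some a : BF0 𝓕)} := by
  letI := τ
  haveI := hT2
  obtain ⟨i, j, F, hF⟩ := a
  set m := sInf F with hm
  have hFI : F = Set.Ici m := mem_fam_eq_Ici hne hind hF
  by_cases hM : ∃ G ∈ 𝓕, sInf G ≠ m
  · -- Case 1: the family contains sets with at least two distinct minima.
    obtain ⟨P, hP, Q, hQ, p, q, hPI, hQI, hq1, hq2⟩ :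
        ∃ P, ∃ (_ : P ∈ 𝓕), ∃ Q, ∃ (_ : Q ∈ 𝓕), ∃ p q : ℕ,
          P = Set.Ici p ∧ Q = Set.Ici q ∧ q = p + 1 ∧ q ≤ m + 1 := by
      obtain ⟨G₀, hG₀, hne0⟩ := hM
      set s0 := sInf G₀ with hs0
      have hG₀I : G₀ = Set.Ici s0 := mem_fam_eq_Ici hne hind hG₀
      rcases Nat.lt_or_ge m s0 with hlt | hge
      · refine ⟨F, hF, F ∩ wShift (s0 - m - 1) G₀, hcl _ F hF G₀ hG₀,
          m, m + 1, hFI, ?_, rfl, le_refl _⟩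
        rw [hG₀I, wShift_Ici, hFI, Set.Ici_inter_Ici]
        exact congrArg Set.Ici (by omega)
      · have hlt : s0 < m := lt_of_le_of_ne hge hne0
        refine ⟨G₀ ∩ wShift 1 F, hcl 1 G₀ hG₀ F hF, F, hF, m - 1, m, ?_, hFI,
          by omega, by omega⟩
        rw [hFI, wShift_Ici, hG₀I, Set.Ici_inter_Ici]
        exact congrArg Set.Ici (by omega)
    set kA := m + i + 1 - q with hkA
    set kB := m + j + 1 - q with hkB
    have hqkA : q + kA = m + i + 1 := by omega
    have hqkB : q + kB = m + j + 1 := by omega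
    have hAclosed : IsClosed {x : BF0 𝓕 |
        BF0mul hcl (some (kA, kA, ⟨P, hP⟩)) x = BF0mul hcl (some (kA, kA, ⟨Q, hQ⟩)) x} :=
      isClosed_eq (hsc _).1 (hsc _).1
    have hBclosed : IsClosed {x : BF0 𝓕 |
        BF0mul hcl x (some (kB, kB, ⟨P, hP⟩)) = BF0mul hcl x (some (kB, kB, ⟨Q, hQ⟩))} :=
      isClosed_eq (hsc _).2 (hsc _).2
    set A := {x : BF0 𝓕 |
        BF0mul hcl (some (kA, kA, ⟨P, hP⟩)) x = BF0mul hcl (some (kA, kA, ⟨Q, hQ⟩)) x}ᶜ with hA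
    set B := {x : BF0 𝓕 |
        BF0mul hcl x (some (kB, kB, ⟨P, hP⟩)) = BF0mul hcl x (some (kB, kB, ⟨Q, hQ⟩))}ᶜ with hB
    have hAmem : ∀ (i₂ j₂ : ℕ) (G : Set ℕ) (hG : G ∈ 𝓕),
        (some (i₂, j₂, ⟨G, hG⟩) ∈ A ↔ sInf G + i₂ ≤ m + i) := by
      intro i₂ j₂ G hG
      have hGI : G = Set.Ici (sInf G) := mem_fam_eq_Ici hne hind hG
      simp only [hA, Set.mem_compl_iff, Set.mem_setOf_eq, BF0mul, Option.some.injEq]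
      rw [left_coeq hcl hP hQ hG hPI hQI hGI hq1]
      omega
    have hBmem : ∀ (i₂ j₂ : ℕ) (G : Set ℕ) (hG : G ∈ 𝓕),
        (some (i₂, j₂, ⟨G, hG⟩) ∈ B ↔ sInf G + j₂ ≤ m + j) := by
      intro i₂ j₂ G hG
      have hGI : G = Set.Ici (sInf G) := mem_fam_eq_Ici hne hind hG
      simp only [hB, Set.mem_compl_iff, Set.mem_setOf_eq, BF0mul, Option.some.injEq]
      rw [right_coeq hcl hP hQ hG hPI hQI hGI hq1]
      omega
    have haA : (some (i, j, ⟨F, hF⟩) : BF0 𝓕) ∈ A := (hAmem i j F hF).2 (by omega)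
    have haB : (some (i, j, ⟨F, hF⟩) : BF0 𝓕) ∈ B := (hBmem i j F hF).2 (by omega)
    -- A ∩ B is finite
    set S₀ := {y : BF 𝓕 | y.1 ≤ m + i ∧ y.2.1 ≤ m + j ∧ sInf y.2.2.1 ≤ m + i} with hS₀
    have hsub : A ∩ B ⊆ some '' S₀ := by
      rintro x ⟨hxA, hxB⟩
      match x with
      | none =>
        exfalso
        exact hxA rfl
      | some y =>
        obtain ⟨i₂, j₂, G, hG⟩ := y
        have h1 := (hAmem i₂ j₂ G hG).1 hxA
        have h2 := (hBmem i₂ j₂ G hG).1 hxB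
        exact ⟨(i₂, j₂, ⟨G, hG⟩), ⟨show i₂ ≤ m + i by omega, show j₂ ≤ m + j by omega,
          show sInf G ≤ m + i by omega⟩, rfl⟩
    have hS₀fin : S₀.Finite := by
      apply Set.Finite.of_finite_image
        (f := fun y : BF 𝓕 => (y.1, y.2.1, sInf y.2.2.1))
      · apply Set.Finite.subset
          (((Set.finite_Iic (m + i)).prod ((Set.finite_Iic (m + j)).prod
            (Set.finite_Iic (m + i)))))
        rintro _ ⟨y, hy, rfl⟩
        exact ⟨hy.1, hy.2.1, hy.2.2⟩
      · rintro ⟨a1, a2, G1, hG1⟩ h₁ ⟨b1, b2, G2, hG2⟩ h₂ heq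
        simp only [Prod.mk.injEq] at heq
        obtain ⟨e1, e2, e3⟩ := heq
        subst e1; subst e2
        have hGG : G1 = G2 := by
          rw [mem_fam_eq_Ici hne hind hG1, mem_fam_eq_Ici hne hind hG2, e3]
        have hGG' : (⟨G1, hG1⟩ : {F : Set ℕ // F ∈ 𝓕}) = ⟨G2, hG2⟩ := Subtype.ext hGG
        rw [hGG']
    have hfin : ((A ∩ B) \ {(some (i, j, ⟨F, hF⟩) : BF0 𝓕)}).Finite :=
      ((hS₀fin.image some).subset (fun x hx => hsub hx.1))
    have hiden : {(some (i, j, ⟨F, hF⟩) : BF0 𝓕)} =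
        (A ∩ B) ∩ ((A ∩ B) \ {(some (i, j, ⟨F, hF⟩) : BF0 𝓕)})ᶜ := by
      ext x
      simp only [Set.mem_singleton_iff, Set.mem_inter_iff, Set.mem_compl_iff,
        Set.mem_diff, Set.mem_singleton_iff]
      constructor
      · rintro rfl; exact ⟨⟨haA, haB⟩, fun h => h.2 rfl⟩
      · rintro ⟨hab, hn⟩
        by_contra hne'
        exact hn ⟨hab, hne'⟩
    rw [hiden]
    exact ((hAclosed.isOpen_compl.inter hBclosed.isOpen_compl)).inter
      hfin.isClosed.isOpen_compl
  · -- Case 2: all members of the family have the same minimum `m`.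
    push_neg at hM
    have hAclosed : IsClosed {x : BF0 𝓕 |
        BF0mul hcl (some (i, i, ⟨F, hF⟩)) x = BF0mul hcl (some (i + 1, i + 1, ⟨F, hF⟩)) x} :=
      isClosed_eq (hsc _).1 (hsc _).1
    have hBclosed : IsClosed {x : BF0 𝓕 |
        BF0mul hcl x (some (j, j, ⟨F, hF⟩)) = BF0mul hcl x (some (j + 1, j + 1, ⟨F, hF⟩))} :=
      isClosed_eq (hsc _).2 (hsc _).2
    set A := {x : BF0 𝓕 |
        BF0mul hcl (some (i, i, ⟨F, hF⟩)) x
          = BF0mul hcl (some (i + 1, i + 1, ⟨F, hF⟩)) x}ᶜ with hA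
    set B := {x : BF0 𝓕 |
        BF0mul hcl x (some (j, j, ⟨F, hF⟩))
          = BF0mul hcl x (some (j + 1, j + 1, ⟨F, hF⟩))}ᶜ with hB
    have hAmem : ∀ (i₂ j₂ : ℕ) (G : Set ℕ) (hG : G ∈ 𝓕),
        (some (i₂, j₂, ⟨G, hG⟩) ∈ A ↔ i₂ ≤ i) := by
      intro i₂ j₂ G hG
      have hGI : G = Set.Ici (sInf G) := mem_fam_eq_Ici hne hind hG
      simp only [hA, Set.mem_compl_iff, Set.mem_setOf_eq, BF0mul, Option.some.injEq]
      rw [left_coeq2 hcl hF hG hFI hGI]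
      have := hM G hG
      omega
    have hBmem : ∀ (i₂ j₂ : ℕ) (G : Set ℕ) (hG : G ∈ 𝓕),
        (some (i₂, j₂, ⟨G, hG⟩) ∈ B ↔ j₂ ≤ j) := by
      intro i₂ j₂ G hG
      have hGI : G = Set.Ici (sInf G) := mem_fam_eq_Ici hne hind hG
      simp only [hB, Set.mem_compl_iff, Set.mem_setOf_eq, BF0mul, Option.some.injEq]
      rw [right_coeq2 hcl hF hG hFI hGI]
      have := hM G hG
      omega
    have haA : (some (i, j, ⟨F, hF⟩) : BF0 𝓕) ∈ A := (hAmem i j F hF).2 le_rfl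
    have haB : (some (i, j, ⟨F, hF⟩) : BF0 𝓕) ∈ B := (hBmem i j F hF).2 le_rfl
    set S₀ := (fun pq : ℕ × ℕ => (some (pq.1, pq.2, ⟨F, hF⟩) : BF0 𝓕)) ''
      (Set.Iic i ×ˢ Set.Iic j) with hS₀
    have hsub : A ∩ B ⊆ S₀ := by
      rintro x ⟨hxA, hxB⟩
      match x with
      | none => exact absurd rfl hxA
      | some y =>
        obtain ⟨i₂, j₂, G, hG⟩ := y
        have h1 := (hAmem i₂ j₂ G hG).1 hxA
        have h2 := (hBmem i₂ j₂ G hG).1 hxB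
        refine ⟨(i₂, j₂), ⟨h1, h2⟩, ?_⟩
        have hGF : (⟨G, hG⟩ : {Fa : Set ℕ // Fa ∈ 𝓕}) = ⟨F, hF⟩ := by
          refine Subtype.ext ?_
          show G = F
          rw [mem_fam_eq_Ici hne hind hG, hM G hG, hFI]
        exact congrArg (fun z => some (i₂, j₂, z)) hGF.symm
    have hS₀fin : S₀.Finite := ((Set.finite_Iic i).prod (Set.finite_Iic j)).image _
    have hfin : ((A ∩ B) \ {(some (i, j, ⟨F, hF⟩) : BF0 𝓕)}).Finite :=
      hS₀fin.subset (fun x hx => hsub hx.1)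
    have hiden : {(some (i, j, ⟨F, hF⟩) : BF0 𝓕)} =
        (A ∩ B) ∩ ((A ∩ B) \ {(some (i, j, ⟨F, hF⟩) : BF0 𝓕)})ᶜ := by
      ext x
      simp only [Set.mem_singleton_iff, Set.mem_inter_iff, Set.mem_compl_iff,
        Set.mem_diff, Set.mem_singleton_iff]
      constructor
      · rintro rfl; exact ⟨⟨haA, haB⟩, fun h => h.2 rfl⟩
      · rintro ⟨hab, hn⟩
        by_contra hne'
        exact hn ⟨hab, hne'⟩
    rw [hiden]
    exact ((hAclosed.isOpen_compl.inter hBclosed.isOpen_compl)).inter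
      hfin.isClosed.isOpen_compl

/-- Lemma 3.1: if `S = B_ω^𝓕 ∪ {0}` carries a Hausdorff locally compact
shift-continuous topology with nonisolated zero, then for any two compact open
neighbourhoods `U`, `V` of the zero, the set `U \ V` is finite. -/
theorem statement5 (𝓕 : Set (Set ℕ)) (hcl : OmegaClosed 𝓕)
    (hne : ∀ F ∈ 𝓕, F.Nonempty) (hind : ∀ F ∈ 𝓕, InductiveSet F)
    (τ : TopologicalSpace (BF0 𝓕)) (hT2 : @T2Space _ τ)
    (hlc : @LocallyCompactSpace _ τ)
    (hsc : ∀ a : BF0 𝓕, @Continuous _ _ τ τ (fun x => BF0mul hcl a x) ∧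
        @Continuous _ _ τ τ (fun x => BF0mul hcl x a))
    (hni : ¬ @IsOpen _ τ {(none : BF0 𝓕)})
    (U V : Set (BF0 𝓕))
    (hUc : @IsCompact _ τ U) (hUo : @IsOpen _ τ U) (hU0 : none ∈ U)
    (hVc : @IsCompact _ τ V) (hVo : @IsOpen _ τ V) (hV0 : none ∈ V) :
    (U \ V).Finite := by
  letI := τ
  haveI := hT2
  have hKcl : IsClosed (U \ V) := by
    rw [Set.diff_eq]
    exact hUc.isClosed.inter (isClosed_compl_iff.mpr hVo)
  have hKc : IsCompact (U \ V) := hUc.of_isClosed_subset hKcl Set.diff_subset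
  have hnone : (none : BF0 𝓕) ∉ U \ V := fun h => h.2 hV0
  have hsing : ∀ x : (U \ V : Set (BF0 𝓕)), IsOpen {(x : BF0 𝓕)} := by
    rintro ⟨x, hx⟩
    match x with
    | none => exact absurd hx hnone
    | some a => exact isolated_pt hcl hne hind τ hT2 hsc a
  obtain ⟨t, ht⟩ := hKc.elim_finite_subcover
    (fun x : (U \ V : Set (BF0 𝓕)) => {(x : BF0 𝓕)})
    (fun x => hsing x)
    (fun x hx => Set.mem_iUnion.mpr ⟨⟨x, hx⟩, rfl⟩)
  exact (t.finite_toSet.biUnion fun i _ => Set.finite_singleton _).subset ht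
end

section
/- Let 𝓕 be an ω-closed family of nonempty inductive subsets of ω and let S = B_ω^𝓕 ∪ {0} be B_ω^𝓕 with an adjoined zero, equipped with a Hausdorff locally compact shift-continuous topology in which 0 is not an isolated point. Then for every neighbourhood U of 0 in S there exists F ∈ 𝓕 such that the set B_ω^{F} \ U is finite. -/
-- ### basics
namespace S7

lemma wShift_Ici (n m : ℕ) : wShift n (Set.Ici m) = Set.Ici (m - n) := by
  ext x; simp only [wShift, Set.mem_Ici, Set.mem_setOf_eq]; omega

variable {𝓕 : Set (Set ℕ)}

/-- `m` is a level of the family. -/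
def Mem (𝓕 : Set (Set ℕ)) (m : ℕ) : Prop := Set.Ici m ∈ 𝓕

open Classical in
noncomputable def el (𝓕 : Set (Set ℕ)) (i j m : ℕ) : BF0 𝓕 :=
  if h : Mem 𝓕 m then some (i, j, ⟨Set.Ici m, h⟩) else none

lemma el_def (i j m : ℕ) (h : Mem 𝓕 m) :
    el 𝓕 i j m = some (i, j, ⟨Set.Ici m, h⟩) := by
  simp only [el, h, dif_pos]

lemma el_ne_none (i j m : ℕ) (h : Mem 𝓕 m) : el 𝓕 i j m ≠ none := by
  rw [el_def i j m h]; simp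

lemma el_inj {i j m i' j' m' : ℕ} (h : Mem 𝓕 m) (h' : Mem 𝓕 m')
    (he : el 𝓕 i j m = el 𝓕 i' j' m') : i = i' ∧ j = j' ∧ m = m' := by
  rw [el_def i j m h, el_def i' j' m' h'] at he
  simp only [Option.some.injEq, Prod.mk.injEq, Subtype.mk.injEq] at he
  obtain ⟨h1, h2, h3⟩ := he
  have h3 : Set.Ici m = Set.Ici m' := congrArg Subtype.val h3
  refine ⟨h1, h2, ?_⟩
  have : m ∈ Set.Ici m' := h3 ▸ Set.self_mem_Ici
  have : m' ∈ Set.Ici m := by rw [h3]; exact Set.self_mem_Ici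
  simp only [Set.mem_Ici] at *; omega

lemma interval_mem {g m k : ℕ} (hcl : OmegaClosed 𝓕) (hg : Mem 𝓕 g) (hm : Mem 𝓕 m)
    (h1 : g ≤ k) (h2 : k ≤ m) : Mem 𝓕 k := by
  have := hcl (m - k) _ hg _ hm
  rwa [wShift_Ici, show m - (m - k) = k by omega,
    Set.Ici_inter_Ici, max_eq_right h1] at this

/-- the min of a member of 𝓕 -/
lemma mem_eq_Ici (hne : ∀ F ∈ 𝓕, F.Nonempty) (hind : ∀ F ∈ 𝓕, InductiveSet F)
    {F : Set ℕ} (hF : F ∈ 𝓕) : F = Set.Ici (sInf F) := by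
  have hn : F.Nonempty := hne F hF
  have hmem : sInf F ∈ F := Nat.sInf_mem hn
  apply Set.eq_of_subset_of_subset
  · intro x hx; exact Nat.sInf_le hx
  · intro x hx
    simp only [Set.mem_Ici] at hx
    obtain ⟨k, hk⟩ := Nat.exists_eq_add_of_le hx
    subst hk
    induction k with
    | zero => exact hmem
    | succ n ih => exact hind F hF _ (ih (by omega))

end S7

-- ### multiplication lemmas
namespace S7
variable {𝓕 : Set (Set ℕ)}

lemma mul_el_le {i₁ j₁ m₁ i₂ j₂ m₂ : ℕ} (hcl : OmegaClosed 𝓕)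
    (h₁ : Mem 𝓕 m₁) (h₂ : Mem 𝓕 m₂) (hle : j₁ ≤ i₂) :
    BF0mul hcl (el 𝓕 i₁ j₁ m₁) (el 𝓕 i₂ j₂ m₂)
      = el 𝓕 (i₁ + (i₂ - j₁)) j₂ (max (m₁ - (i₂ - j₁)) m₂) := by
  have hset : wShift (i₂ - j₁) (Set.Ici m₁) ∩ Set.Ici m₂
      = Set.Ici (max (m₁ - (i₂ - j₁)) m₂) := by
    rw [wShift_Ici, Set.Ici_inter_Ici]
  have hmem : Mem 𝓕 (max (m₁ - (i₂ - j₁)) m₂) := by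
    unfold Mem
    rw [← hset, Set.inter_comm]
    exact hcl _ _ h₂ _ h₁
  rw [el_def _ _ _ h₁, el_def _ _ _ h₂, el_def _ _ _ hmem]
  show some (BFmul hcl _ _) = _
  unfold BFmul
  simp only [hle, if_pos]
  exact congrArg some (by
    refine Prod.ext rfl (Prod.ext rfl ?_)
    exact Subtype.ext hset)

lemma mul_el_ge {i₁ j₁ m₁ i₂ j₂ m₂ : ℕ} (hcl : OmegaClosed 𝓕)
    (h₁ : Mem 𝓕 m₁) (h₂ : Mem 𝓕 m₂) (hge : i₂ ≤ j₁) :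
    BF0mul hcl (el 𝓕 i₁ j₁ m₁) (el 𝓕 i₂ j₂ m₂)
      = el 𝓕 i₁ (j₂ + (j₁ - i₂)) (max m₁ (m₂ - (j₁ - i₂))) := by
  by_cases heq : j₁ ≤ i₂
  · have : i₂ = j₁ := le_antisymm hge heq
    subst this
    rw [mul_el_le hcl h₁ h₂ le_rfl]
    simp
  · have hset : Set.Ici m₁ ∩ wShift (j₁ - i₂) (Set.Ici m₂)
        = Set.Ici (max m₁ (m₂ - (j₁ - i₂))) := by
      rw [wShift_Ici, Set.Ici_inter_Ici]
    have hmem : Mem 𝓕 (max m₁ (m₂ - (j₁ - i₂))) := by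
      unfold Mem; rw [← hset]; exact hcl _ _ h₁ _ h₂
    rw [el_def _ _ _ h₁, el_def _ _ _ h₂, el_def _ _ _ hmem]
    show some (BFmul hcl _ _) = _
    unfold BFmul
    simp only [heq, if_neg, if_false]
    exact congrArg some (by
      refine Prod.ext rfl (Prod.ext rfl ?_)
      exact Subtype.ext hset)

lemma mul_none_right (hcl : OmegaClosed 𝓕) (y : BF0 𝓕) :
    BF0mul hcl y none = none := by cases y <;> rfl

lemma mul_none_left (hcl : OmegaClosed 𝓕) (y : BF0 𝓕) :
    BF0mul hcl none y = none := by cases y <;> rfl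

end S7

-- ### helpers for isolation
open Topology
namespace S7
variable {𝓕 : Set (Set ℕ)}

lemma el_ne {i j m i' j' m' : ℕ} (h : Mem 𝓕 m)
    (hne : i ≠ i' ∨ j ≠ j' ∨ m ≠ m') :
    el 𝓕 i j m ≠ el 𝓕 i' j' m' := by
  intro he
  by_cases h' : Mem 𝓕 m'
  · obtain ⟨e1, e2, e3⟩ := el_inj h h' he
    tauto
  · rw [show el 𝓕 i' j' m' = none from dif_neg h'] at he
    exact el_ne_none _ _ _ h he

lemma piece_bot {X : Type*} [TopologicalSpace X] [T2Space X] {P : Set X} {x : X}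
    {w₁ w₂ : X → X} (hc₁ : Continuous w₁) (hc₂ : Continuous w₂)
    (heq : Set.EqOn w₁ w₂ P) (hne : w₁ x ≠ w₂ x) : 𝓝[P] x = ⊥ := by
  by_contra hb
  haveI hnb : (𝓝[P] x).NeBot := ⟨hb⟩
  apply hne
  apply eq_of_nhds_neBot (x := w₁ x) (y := w₂ x)
  have h1 : Filter.Tendsto w₁ (𝓝[P] x) (𝓝 (w₁ x)) := hc₁.continuousWithinAt
  have h2 : Filter.Tendsto w₂ (𝓝[P] x) (𝓝 (w₂ x)) := hc₂.continuousWithinAt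
  have hmapeq : Filter.map w₁ (𝓝[P] x) = Filter.map w₂ (𝓝[P] x) :=
    Filter.map_congr (Filter.eventuallyEq_of_mem self_mem_nhdsWithin heq)
  have hle : Filter.map w₁ (𝓝[P] x) ≤ 𝓝 (w₁ x) ⊓ 𝓝 (w₂ x) :=
    le_inf h1 (hmapeq ▸ h2)
  exact Filter.neBot_of_le hle

end S7

-- ### every nonzero point is isolated
namespace S7
open Topology
variable {𝓕 : Set (Set ℕ)}

lemma isolated (hcl : OmegaClosed 𝓕) (hne : ∀ F ∈ 𝓕, F.Nonempty)
    (hind : ∀ F ∈ 𝓕, InductiveSet F)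
    (τ : TopologicalSpace (BF0 𝓕)) (hT2 : @T2Space _ τ)
    (hsc : ∀ a : BF0 𝓕, @Continuous _ _ τ τ (fun x => BF0mul hcl a x) ∧
        @Continuous _ _ τ τ (fun x => BF0mul hcl x a))
    (z : BF 𝓕) : @IsOpen _ τ {(some z : BF0 𝓕)} := by
  letI := τ; haveI := hT2
  obtain ⟨p, q, F⟩ := z
  have hFIci : F.1 = Set.Ici (sInf F.1) := mem_eq_Ici hne hind F.2
  set g := sInf F.1 with hgdef
  have hg : Mem 𝓕 g := by unfold Mem; rw [← hFIci]; exact F.2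
  have hx : (some (p, q, F) : BF0 𝓕) = el 𝓕 p q g := by
    rw [el_def _ _ _ hg]
    exact congrArg some (Prod.ext rfl (Prod.ext rfl (Subtype.ext hFIci)))
  rw [hx, isOpen_singleton_iff_punctured_nhds]
  have hMne : {m | Mem 𝓕 m}.Nonempty := ⟨g, hg⟩
  have hμ : Mem 𝓕 (sInf {m | Mem 𝓕 m}) := Nat.sInf_mem hMne
  set μ := sInf {m | Mem 𝓕 m} with hμdef
  have hμle : ∀ {m : ℕ}, Mem 𝓕 m → μ ≤ m := fun hm => Nat.sInf_le hm
  set c := g + p + 1 with hcdef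
  set x := el 𝓕 p q g with hxdef
  set P₁ : Set (BF0 𝓕) := {y | ∃ r s m, Mem 𝓕 m ∧ y = el 𝓕 r s m ∧ p < r} with hP₁def
  set P₂ : Set (BF0 𝓕) := {y | ∃ r s m, Mem 𝓕 m ∧ y = el 𝓕 r s m ∧ q < s} with hP₂def
  set P₅ : Set (BF0 𝓕) :=
    {y | Mem 𝓕 c ∧ ∃ r s m, Mem 𝓕 m ∧ y = el 𝓕 r s m ∧ c ≤ m + r} with hP₅def
  set LL : Set (BF0 𝓕) :=
    ({y | ∃ r s m, Mem 𝓕 m ∧ y = el 𝓕 r s m ∧ r ≤ p ∧ s ≤ q ∧ m < c} \ {x}) ∪ {none}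
    with hLLdef
  have cover : {x}ᶜ ⊆ ((LL ∪ P₁) ∪ P₂) ∪ P₅ := by
    intro y hy
    match y with
    | none =>
      exact Or.inl (Or.inl (Or.inl (Or.inr rfl)))
    | some (r, s, F') =>
      have hF'Ici : F'.1 = Set.Ici (sInf F'.1) := mem_eq_Ici hne hind F'.2
      set m := sInf F'.1 with hmdef
      have hm : Mem 𝓕 m := by unfold Mem; rw [← hF'Ici]; exact F'.2
      have hyel : (some (r, s, F') : BF0 𝓕) = el 𝓕 r s m := by
        rw [el_def _ _ _ hm]
        exact congrArg some (Prod.ext rfl (Prod.ext rfl (Subtype.ext hF'Ici)))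
      by_cases h1 : p < r
      · exact Or.inl (Or.inl (Or.inr ⟨r, s, m, hm, hyel, h1⟩))
      by_cases h2 : q < s
      · exact Or.inl (Or.inr ⟨r, s, m, hm, hyel, h2⟩)
      by_cases h3 : Mem 𝓕 c ∧ c ≤ m + r
      · exact Or.inr ⟨h3.1, r, s, m, hm, hyel, h3.2⟩
      · refine Or.inl (Or.inl (Or.inl (Or.inl ⟨⟨r, s, m, hm, hyel, by omega, by omega, ?_⟩,
          fun hy' => hy (by simpa using hy')⟩)))
        by_cases hMc : Mem 𝓕 c
        · have : ¬ c ≤ m + r := fun h => h3 ⟨hMc, h⟩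
          omega
        · by_contra hlt
          exact hMc (interval_mem hcl hg hm (by omega) (by omega))
  have hLL : 𝓝[LL] x = ⊥ := by
    have hfin : LL.Finite := by
      apply Set.Finite.union _ (Set.finite_singleton _)
      apply Set.Finite.diff
      have himg : {y : BF0 𝓕 | ∃ r s m, Mem 𝓕 m ∧ y = el 𝓕 r s m ∧ r ≤ p ∧ s ≤ q ∧ m < c}
          ⊆ (fun t : ℕ × ℕ × ℕ => el 𝓕 t.1 t.2.1 t.2.2) ''
            (Set.Iic p ×ˢ Set.Iic q ×ˢ Set.Iio c) := by
        rintro y ⟨r, s, m, hm, rfl, h1, h2, h3⟩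
        exact ⟨(r, s, m), ⟨h1, h2, h3⟩, rfl⟩
      exact (Set.Finite.image _
        ((Set.finite_Iic p).prod ((Set.finite_Iic q).prod (Set.finite_Iio c)))).subset himg
    have hxnot : x ∉ LL := by
      rintro (⟨-, hx2⟩ | hx3)
      · exact hx2 rfl
      · exact el_ne_none _ _ _ hg (by simpa using hx3)
    by_contra hb
    have hmem : x ∈ closure LL := mem_closure_iff_nhdsWithin_neBot.2 ⟨hb⟩
    rw [hfin.isClosed.closure_eq] at hmem
    exact hxnot hmem
  have hsub : ∀ {t m : ℕ}, Mem 𝓕 m → μ - t ≤ m :=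
    fun {t m} hm => le_trans (Nat.sub_le _ _) (hμle hm)
  have hP1 : 𝓝[P₁] x = ⊥ := by
    apply piece_bot (w₁ := fun y => BF0mul hcl (el 𝓕 0 p μ) y)
      (w₂ := fun y => BF0mul hcl (el 𝓕 1 (p + 1) μ) y) (hsc _).1 (hsc _).1
    · rintro y ⟨r, s, m, hm, rfl, hr⟩
      show BF0mul hcl (el 𝓕 0 p μ) (el 𝓕 r s m)
          = BF0mul hcl (el 𝓕 1 (p + 1) μ) (el 𝓕 r s m)
      rw [mul_el_le hcl hμ hm (by omega), mul_el_le hcl hμ hm (by omega),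
        max_eq_right (hsub hm), max_eq_right (hsub hm),
        show 0 + (r - p) = 1 + (r - (p + 1)) by omega]
    · show BF0mul hcl (el 𝓕 0 p μ) x ≠ BF0mul hcl (el 𝓕 1 (p + 1) μ) x
      rw [hxdef, mul_el_le hcl hμ hg le_rfl, mul_el_ge hcl hμ hg (by omega),
        Nat.sub_self, Nat.sub_zero, max_eq_right (hμle hg)]
      exact el_ne hg (Or.inl (by omega))
  have hP2 : 𝓝[P₂] x = ⊥ := by
    apply piece_bot (w₁ := fun y => BF0mul hcl y (el 𝓕 q 0 μ))
      (w₂ := fun y => BF0mul hcl y (el 𝓕 (q + 1) 1 μ)) (hsc _).2 (hsc _).2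
    · rintro y ⟨r, s, m, hm, rfl, hs⟩
      show BF0mul hcl (el 𝓕 r s m) (el 𝓕 q 0 μ)
          = BF0mul hcl (el 𝓕 r s m) (el 𝓕 (q + 1) 1 μ)
      rw [mul_el_ge hcl hm hμ (by omega), mul_el_ge hcl hm hμ (by omega),
        max_eq_left (hsub hm), max_eq_left (hsub hm),
        show 0 + (s - q) = 1 + (s - (q + 1)) by omega]
    · show BF0mul hcl x (el 𝓕 q 0 μ) ≠ BF0mul hcl x (el 𝓕 (q + 1) 1 μ)
      rw [hxdef, mul_el_le hcl hg hμ le_rfl, mul_el_le hcl hg hμ (by omega),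
        Nat.sub_self, Nat.sub_zero, max_eq_left (hμle hg)]
      exact el_ne hg (Or.inl (by omega))
  have hP5 : 𝓝[P₅] x = ⊥ := by
    by_cases hMc : Mem 𝓕 c
    · apply piece_bot (w₁ := fun y => BF0mul hcl (el 𝓕 0 0 μ) y)
        (w₂ := fun y => BF0mul hcl (el 𝓕 0 0 c) y) (hsc _).1 (hsc _).1
      · rintro y ⟨-, r, s, m, hm, rfl, hcr⟩
        show BF0mul hcl (el 𝓕 0 0 μ) (el 𝓕 r s m)
            = BF0mul hcl (el 𝓕 0 0 c) (el 𝓕 r s m)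
        rw [mul_el_le hcl hμ hm (Nat.zero_le r), mul_el_le hcl hMc hm (Nat.zero_le r),
          max_eq_right (hsub hm), max_eq_right (by omega : c - (r - 0) ≤ m)]
      · show BF0mul hcl (el 𝓕 0 0 μ) x ≠ BF0mul hcl (el 𝓕 0 0 c) x
        rw [hxdef, mul_el_le hcl hμ hg (Nat.zero_le p), mul_el_le hcl hMc hg (Nat.zero_le p),
          max_eq_right (hsub hg), show c - (p - 0) = g + 1 by omega,
          max_eq_left (by omega : g ≤ g + 1)]
        exact el_ne hg (Or.inr (Or.inr (by omega)))
    · have hemp : P₅ = ∅ := by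
        ext y; simp only [hP₅def, Set.mem_setOf_eq, Set.mem_empty_iff_false, iff_false]
        rintro ⟨hc', -⟩; exact hMc hc'
      rw [hemp]; exact nhdsWithin_empty x
  have hle : 𝓝[{x}ᶜ] x ≤ 𝓝[((LL ∪ P₁) ∪ P₂) ∪ P₅] x := nhdsWithin_mono _ cover
  rw [nhdsWithin_union, nhdsWithin_union, nhdsWithin_union, hLL, hP1, hP2, hP5] at hle
  simpa using le_bot_iff.mp (by simpa using hle)

end S7

-- ### small helpers
namespace S7
variable {𝓕 : Set (Set ℕ)}

lemma sInf_Ici (m : ℕ) : sInf (Set.Ici m) = m := by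
  apply le_antisymm
  · exact Nat.sInf_le Set.self_mem_Ici
  · exact Nat.sInf_mem (⟨m, Set.self_mem_Ici⟩ : (Set.Ici m).Nonempty)

lemma bound_of_finite {S : Set (ℕ × ℕ)} (h : S.Finite) :
    ∃ N, ∀ pp ∈ S, pp.1 + pp.2 < N := by
  obtain ⟨N, hN⟩ := (h.image (fun pp => pp.1 + pp.2)).bddAbove
  exact ⟨N + 1, fun pp hpp => by
    have := hN (Set.mem_image_of_mem _ hpp); omega⟩

lemma finite_small_sum (N : ℕ) : {pp : ℕ × ℕ | pp.1 + pp.2 < N}.Finite := by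
  apply Set.Finite.subset ((Set.finite_Iio N).prod (Set.finite_Iio N))
  rintro ⟨a, b⟩ h
  simp only [Set.mem_setOf_eq] at h
  exact ⟨by simpa using by omega, by simpa using by omega⟩

/-- name and min of a nonzero element -/
noncomputable def ψ (𝓕 : Set (Set ℕ)) : BF0 𝓕 → (ℕ × ℕ) × ℕ :=
  fun y => match y with
  | none => ((0, 0), 0)
  | some (i, j, F) => ((i, j), sInf F.1)

lemma some_eq_el (hne : ∀ F ∈ 𝓕, F.Nonempty) (hind : ∀ F ∈ 𝓕, InductiveSet F)
    (r s : ℕ) (F' : {F : Set ℕ // F ∈ 𝓕}) :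
    Mem 𝓕 (sInf F'.1) ∧ (some (r, s, F') : BF0 𝓕) = el 𝓕 r s (sInf F'.1) := by
  have hFIci : F'.1 = Set.Ici (sInf F'.1) := mem_eq_Ici hne hind F'.2
  have hm : Mem 𝓕 (sInf F'.1) := by unfold Mem; rw [← hFIci]; exact F'.2
  refine ⟨hm, ?_⟩
  rw [el_def _ _ _ hm]
  exact congrArg some (Prod.ext rfl (Prod.ext rfl (Subtype.ext hFIci)))

lemma psi_el (r s m : ℕ) (h : Mem 𝓕 m) : ψ 𝓕 (el 𝓕 r s m) = ((r, s), m) := by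
  rw [el_def _ _ _ h]
  show ((r, s), sInf (Set.Ici m)) = ((r, s), m)
  rw [sInf_Ici]

end S7

open S7 in
/-- Lemma 3.3: if `S = B_ω^𝓕 ∪ {0}` carries a Hausdorff locally compact
shift-continuous topology with nonisolated zero, then for every neighbourhood `U`
of the zero there exists `F ∈ 𝓕` with `B_ω^{F} \ U` finite, where
`B_ω^{F} = {(i,j,F) : i,j ∈ ω}`. -/
theorem statement7 (𝓕 : Set (Set ℕ)) (hcl : OmegaClosed 𝓕)
    (hne : ∀ F ∈ 𝓕, F.Nonempty) (hind : ∀ F ∈ 𝓕, InductiveSet F)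
    (τ : TopologicalSpace (BF0 𝓕)) (hT2 : @T2Space _ τ)
    (hlc : @LocallyCompactSpace _ τ)
    (hsc : ∀ a : BF0 𝓕, @Continuous _ _ τ τ (fun x => BF0mul hcl a x) ∧
        @Continuous _ _ τ τ (fun x => BF0mul hcl x a))
    (hni : ¬ @IsOpen _ τ {(none : BF0 𝓕)})
    (U : Set (BF0 𝓕)) (hU : U ∈ @nhds _ τ none) :
    ∃ F : Set ℕ, ∃ hF : F ∈ 𝓕,
      ({x : BF0 𝓕 | ∃ i j : ℕ, x = some (i, j, ⟨F, hF⟩)} \ U).Finite := by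
  classical
  letI := τ; haveI := hT2; haveI := hlc
  obtain ⟨K, hKmem, hKU, hKcomp⟩ := local_compact_nhds hU
  have hnoneK : (none : BF0 𝓕) ∈ interior K := mem_interior_iff_mem_nhds.2 hKmem
  -- K minus any neighbourhood of zero is finite
  have hFIN : ∀ V ∈ @nhds _ τ (none : BF0 𝓕), (K \ V).Finite := by
    intro V hV
    apply Set.Finite.subset ?_ (Set.diff_subset_diff_right interior_subset)
    have hcomp2 : IsCompact (K \ interior V) := hKcomp.diff isOpen_interior
    have hnone : (none : BF0 𝓕) ∉ K \ interior V := by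
      intro h; exact h.2 (mem_interior_iff_mem_nhds.2 hV)
    set Uo : BF0 𝓕 → Set (BF0 𝓕) := fun z => if z = none then ∅ else {z} with hUo
    have hUoopen : ∀ z, IsOpen (Uo z) := by
      intro z
      match z with
      | none => simp only [hUo, if_pos rfl]; exact isOpen_empty
      | some z' =>
        simp only [hUo, if_neg (Option.some_ne_none z')]
        exact isolated hcl hne hind τ hT2 hsc z'
    have hcov : K \ interior V ⊆ ⋃ z, Uo z := by
      intro w hw
      refine Set.mem_iUnion.2 ⟨w, ?_⟩
      have : w ≠ none := fun h => hnone (h ▸ hw)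
      simp [hUo, if_neg this]
    obtain ⟨t, ht⟩ := hcomp2.elim_finite_subcover Uo hUoopen hcov
    apply Set.Finite.subset t.finite_toSet
    intro w hw
    obtain ⟨z, hz, hwz⟩ := Set.mem_iUnion₂.1 (ht hw)
    by_cases hzn : z = none
    · rw [hzn] at hwz; simp [hUo] at hwz
    · simp only [hUo, if_neg hzn, Set.mem_singleton_iff] at hwz
      rwa [hwz]
  -- K is infinite
  have hKinf : K.Infinite := by
    by_contra hfin
    rw [Set.not_infinite] at hfin
    have h1 : (K \ {(none : BF0 𝓕)}).Finite := hfin.diff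
    have h2 : IsClosed (K \ {(none : BF0 𝓕)}) := h1.isClosed
    have h3 : ({(none : BF0 𝓕)} : Set (BF0 𝓕)) ∈ @nhds _ τ none := by
      have hmem : K ∩ (K \ {(none : BF0 𝓕)})ᶜ ∈ @nhds _ τ none := by
        apply Filter.inter_mem hKmem
        exact h2.isOpen_compl.mem_nhds (by simp)
      apply Filter.mem_of_superset hmem
      rintro w ⟨hwK, hwc⟩
      simp only [Set.mem_compl_iff, Set.mem_diff, not_and, not_not] at hwc
      exact hwc hwK
    obtain ⟨t, hts, hto, htn⟩ := mem_nhds_iff.1 h3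
    have : t = {(none : BF0 𝓕)} :=
      Set.eq_singleton_iff_nonempty_unique_mem.2 ⟨⟨_, htn⟩, fun w hw => hts hw⟩
    exact hni (this ▸ hto)
  -- absorption
  have hABS : ∀ w : BF0 𝓕 → BF0 𝓕, @Continuous _ _ τ τ w → w none = none →
      (K \ w ⁻¹' K).Finite := by
    intro w hwc hw0
    apply hFIN
    have := (hwc.continuousAt (x := (none : BF0 𝓕)))
    apply this.preimage_mem_nhds
    rwa [hw0]
  -- the minimal level
  have hKBinf : (K \ {(none : BF0 𝓕)}).Infinite := hKinf.diff (Set.finite_singleton _)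
  obtain ⟨y₀, hy₀K, hy₀n⟩ := hKBinf.nonempty
  have hMne : {m | Mem 𝓕 m}.Nonempty := by
    match y₀, hy₀n with
    | some (r₀, s₀, F₀), _ => exact ⟨sInf F₀.1, (some_eq_el hne hind r₀ s₀ F₀).1⟩
  have hμ : Mem 𝓕 (sInf {m | Mem 𝓕 m}) := Nat.sInf_mem hMne
  set μ := sInf {m | Mem 𝓕 m} with hμdef
  have hμle : ∀ {m : ℕ}, Mem 𝓕 m → μ ≤ m := fun hm => Nat.sInf_le hm
  have hsub : ∀ {t m : ℕ}, Mem 𝓕 m → μ - t ≤ m :=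
    fun {t m} hm => le_trans (Nat.sub_le _ _) (hμle hm)
  -- the incidence set
  set KB' : Set ((ℕ × ℕ) × ℕ) :=
    {t | Mem 𝓕 t.2 ∧ el 𝓕 t.1.1 t.1.2 t.2 ∈ K} with hKB'def
  have hKB'inf : KB'.Infinite := by
    apply Set.Infinite.mono (s := ψ 𝓕 '' (K \ {(none : BF0 𝓕)}))
    · rintro t ⟨y, ⟨hyK, hyn⟩, rfl⟩
      match y, hyn, hyK with
      | some (r, s, F'), _, hyK =>
        obtain ⟨hm, hel⟩ := some_eq_el hne hind r s F'
        have hpsi : ψ 𝓕 (some (r, s, F')) = ((r, s), sInf F'.1) := rfl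
        rw [hpsi]
        exact ⟨hm, hel ▸ hyK⟩
    · have hinj : Set.InjOn (ψ 𝓕) (K \ {(none : BF0 𝓕)}) := by
        rintro y ⟨hyK, hyn⟩ y' ⟨hyK', hyn'⟩ he
        match y, hyn, y', hyn', he with
        | some (r, s, F'), _, some (r', s', F''), _, he =>
          have hp1 : ψ 𝓕 (some (r, s, F')) = ((r, s), sInf F'.1) := rfl
          have hp2 : ψ 𝓕 (some (r', s', F'')) = ((r', s'), sInf F''.1) := rfl
          rw [hp1, hp2] at he
          simp only [Prod.mk.injEq] at he
          obtain ⟨⟨h1, h2⟩, h3⟩ := he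
          subst h1; subst h2
          have e1 : F'.1 = Set.Ici (sInf F'.1) := mem_eq_Ici hne hind F'.2
          have e2 : F''.1 = Set.Ici (sInf F''.1) := mem_eq_Ici hne hind F''.2
          have : F' = F'' := Subtype.ext (by rw [e1, e2, h3])
          rw [this]
      exact (Set.infinite_image_iff hinj).2 hKBinf
  -- the four moves and the transport words
  set uu : BF0 𝓕 → BF0 𝓕 := fun y => BF0mul hcl (el 𝓕 1 0 μ) y with huudef
  set dd : BF0 𝓕 → BF0 𝓕 := fun y => BF0mul hcl (el 𝓕 0 1 μ) y with hdddef
  set vv : BF0 𝓕 → BF0 𝓕 := fun y => BF0mul hcl y (el 𝓕 0 1 μ) with hvvdef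
  set ee : BF0 𝓕 → BF0 𝓕 := fun y => BF0mul hcl y (el 𝓕 1 0 μ) with heedef
  have huu : ∀ r s m, Mem 𝓕 m → uu (el 𝓕 r s m) = el 𝓕 (r + 1) s m := by
    intro r s m hm
    rw [huudef]
    show BF0mul hcl (el 𝓕 1 0 μ) (el 𝓕 r s m) = _
    rw [mul_el_le hcl hμ hm (Nat.zero_le r), max_eq_right (hsub hm),
      show 1 + (r - 0) = r + 1 by omega]
  have hdd : ∀ r s m, Mem 𝓕 m → 1 ≤ r → dd (el 𝓕 r s m) = el 𝓕 (r - 1) s m := by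
    intro r s m hm hr
    rw [hdddef]
    show BF0mul hcl (el 𝓕 0 1 μ) (el 𝓕 r s m) = _
    rw [mul_el_le hcl hμ hm hr, max_eq_right (hsub hm), Nat.zero_add]
  have hvv : ∀ r s m, Mem 𝓕 m → vv (el 𝓕 r s m) = el 𝓕 r (s + 1) m := by
    intro r s m hm
    rw [hvvdef]
    show BF0mul hcl (el 𝓕 r s m) (el 𝓕 0 1 μ) = _
    rw [mul_el_ge hcl hm hμ (Nat.zero_le s), max_eq_left (hsub hm),
      show 1 + (s - 0) = s + 1 by omega]
  have hee : ∀ r s m, Mem 𝓕 m → 1 ≤ s → ee (el 𝓕 r s m) = el 𝓕 r (s - 1) m := by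
    intro r s m hm hs
    rw [heedef]
    show BF0mul hcl (el 𝓕 r s m) (el 𝓕 1 0 μ) = _
    rw [mul_el_ge hcl hm hμ hs, max_eq_left (hsub hm), Nat.zero_add]
  have htw : ∀ a b r₀ s₀ m, Mem 𝓕 m →
      BF0mul hcl (BF0mul hcl (el 𝓕 a r₀ μ) (el 𝓕 r₀ s₀ m)) (el 𝓕 s₀ b μ)
        = el 𝓕 a b m := by
    intro a b r₀ s₀ m hm
    rw [mul_el_le hcl hμ hm le_rfl, Nat.sub_self, Nat.sub_zero, Nat.add_zero,
      max_eq_right (hμle hm), mul_el_le hcl hm hμ le_rfl, Nat.sub_self, Nat.sub_zero,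
      Nat.add_zero, max_eq_left (hμle hm)]
  -- finite exception sets
  have hEuu : (K \ uu ⁻¹' K).Finite := by
    apply hABS _ (hsc _).1
    exact mul_none_right hcl _
  have hEdd : (K \ dd ⁻¹' K).Finite := by
    apply hABS _ (hsc _).1
    exact mul_none_right hcl _
  have hEvv : (K \ vv ⁻¹' K).Finite := by
    apply hABS _ (hsc _).2
    exact mul_none_left hcl _
  have hEee : (K \ ee ⁻¹' K).Finite := by
    apply hABS _ (hsc _).2
    exact mul_none_left hcl _
  -- traces
  set tr : ℕ → ℕ → Set ℕ := fun a b => {m | ((a, b), m) ∈ KB'} with htrdef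
  have htrK : ∀ {a b m}, m ∈ tr a b → Mem 𝓕 m ∧ el 𝓕 a b m ∈ K := fun h => h
  -- finiteness of position sets of finite exception sets
  have hposfin : ∀ (E : Set (BF0 𝓕)), E.Finite →
      {pp : ℕ × ℕ | ∃ m, Mem 𝓕 m ∧ el 𝓕 pp.1 pp.2 m ∈ E}.Finite := by
    intro E hE
    apply Set.Finite.subset (hE.image (fun y => (ψ 𝓕 y).1))
    rintro pp ⟨m, hm, hmE⟩
    refine ⟨el 𝓕 pp.1 pp.2 m, hmE, ?_⟩
    show (ψ 𝓕 (el 𝓕 pp.1 pp.2 m)).1 = pp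
    rw [psi_el _ _ _ hm]
  -- dichotomy
  have hdico : (∃ r₀ s₀, (tr r₀ s₀).Infinite) ∨
      ({pp : ℕ × ℕ | (tr pp.1 pp.2).Nonempty}).Infinite := by
    by_contra hcon
    push_neg at hcon
    obtain ⟨h1, h2⟩ := hcon
    have h1' : ∀ r s, (tr r s).Finite := by
      intro r s; have := h1 r s; exact this
    apply hKB'inf
    have hsubun : KB' ⊆ ⋃ pp ∈ {pp : ℕ × ℕ | (tr pp.1 pp.2).Nonempty},
        (fun m => (pp, m)) '' tr pp.1 pp.2 := by
      rintro ⟨⟨a, b⟩, m⟩ ht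
      exact Set.mem_biUnion
        (show ((a, b) : ℕ × ℕ) ∈ {pp : ℕ × ℕ | (tr pp.1 pp.2).Nonempty} from ⟨m, ht⟩)
        ⟨m, ht, rfl⟩
    exact (Set.Finite.biUnion h2 (fun pp _ => (h1' pp.1 pp.2).image _)).subset hsubun
  -- an infinite trace fills all positions
  have hfill : ∀ r₀ s₀, (tr r₀ s₀).Infinite → ∀ a b, (tr a b).Nonempty := by
    intro r₀ s₀ hinf a b
    set w : BF0 𝓕 → BF0 𝓕 :=
      fun y => BF0mul hcl (BF0mul hcl (el 𝓕 a r₀ μ) y) (el 𝓕 s₀ b μ) with hwdef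
    have hwc : @Continuous _ _ τ τ w :=
      ((hsc (el 𝓕 s₀ b μ)).2).comp ((hsc (el 𝓕 a r₀ μ)).1)
    have hw0 : w none = none := by
      rw [hwdef]
      show BF0mul hcl (BF0mul hcl _ none) _ = none
      rw [mul_none_right hcl, mul_none_left hcl]
    have hEw := hABS w hwc hw0
    have hbad : (tr r₀ s₀ ∩ {m | Mem 𝓕 m ∧ el 𝓕 r₀ s₀ m ∈ K \ w ⁻¹' K}).Finite := by
      apply Set.Finite.subset (hEw.image (fun y => (ψ 𝓕 y).2))
      rintro m ⟨hmt, hm', hmE⟩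
      refine ⟨el 𝓕 r₀ s₀ m, hmE, ?_⟩
      show (ψ 𝓕 (el 𝓕 r₀ s₀ m)).2 = m
      rw [psi_el _ _ _ hm']
    obtain ⟨m, hmt, hmne⟩ := (hinf.diff hbad).nonempty
    have hm : Mem 𝓕 m := (htrK hmt).1
    have hwK : el 𝓕 r₀ s₀ m ∈ w ⁻¹' K := by
      by_contra hne'
      exact hmne ⟨hmt, hm, (htrK hmt).2, hne'⟩
    have : w (el 𝓕 r₀ s₀ m) = el 𝓕 a b m := htw a b r₀ s₀ m hm
    exact ⟨m, hm, by rw [← this]; exact hwK⟩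
  -- all far positions are occupied
  have hOCC : ∃ N₀, ∀ a b, N₀ ≤ a + b → (tr a b).Nonempty := by
    rcases hdico with ⟨r₀, s₀, hinf⟩ | hPinf
    · exact ⟨0, fun a b _ => hfill r₀ s₀ hinf a b⟩
    · set badU := {pp : ℕ × ℕ | ∃ m, Mem 𝓕 m ∧ el 𝓕 pp.1 pp.2 m ∈ K \ uu ⁻¹' K}
      set badD := {pp : ℕ × ℕ | ∃ m, Mem 𝓕 m ∧ el 𝓕 pp.1 pp.2 m ∈ K \ dd ⁻¹' K}
      set badV := {pp : ℕ × ℕ | ∃ m, Mem 𝓕 m ∧ el 𝓕 pp.1 pp.2 m ∈ K \ vv ⁻¹' K}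
      set badE := {pp : ℕ × ℕ | ∃ m, Mem 𝓕 m ∧ el 𝓕 pp.1 pp.2 m ∈ K \ ee ⁻¹' K}
      obtain ⟨N, hN⟩ := bound_of_finite
        (((hposfin _ hEuu).union (hposfin _ hEdd)).union
          ((hposfin _ hEvv).union (hposfin _ hEee)))
      have cU' : ∀ a b, N ≤ a + b → (tr a b).Nonempty → (tr (a + 1) b).Nonempty := by
        intro a b hab ⟨m, hmt⟩
        have hm := (htrK hmt).1
        have hnotbad : (a, b) ∉ badU := by
          intro hb; have := hN _ (Or.inl (Or.inl hb)); simp at this; omega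
        have : el 𝓕 a b m ∈ uu ⁻¹' K := by
          by_contra hne'
          exact hnotbad ⟨m, hm, (htrK hmt).2, hne'⟩
        refine ⟨m, hm, ?_⟩
        rw [← huu a b m hm]; exact this
      have cD' : ∀ a b, N ≤ a + b → 1 ≤ a → (tr a b).Nonempty →
          (tr (a - 1) b).Nonempty := by
        intro a b hab ha ⟨m, hmt⟩
        have hm := (htrK hmt).1
        have hnotbad : (a, b) ∉ badD := by
          intro hb; have := hN _ (Or.inl (Or.inr hb)); simp at this; omega
        have : el 𝓕 a b m ∈ dd ⁻¹' K := by
          by_contra hne'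
          exact hnotbad ⟨m, hm, (htrK hmt).2, hne'⟩
        refine ⟨m, hm, ?_⟩
        rw [← hdd a b m hm ha]; exact this
      have cV' : ∀ a b, N ≤ a + b → (tr a b).Nonempty → (tr a (b + 1)).Nonempty := by
        intro a b hab ⟨m, hmt⟩
        have hm := (htrK hmt).1
        have hnotbad : (a, b) ∉ badV := by
          intro hb; have := hN _ (Or.inr (Or.inl hb)); simp at this; omega
        have : el 𝓕 a b m ∈ vv ⁻¹' K := by
          by_contra hne'
          exact hnotbad ⟨m, hm, (htrK hmt).2, hne'⟩
        refine ⟨m, hm, ?_⟩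
        rw [← hvv a b m hm]; exact this
      have cE' : ∀ a b, N ≤ a + b → 1 ≤ b → (tr a b).Nonempty →
          (tr a (b - 1)).Nonempty := by
        intro a b hab hb ⟨m, hmt⟩
        have hm := (htrK hmt).1
        have hnotbad : (a, b) ∉ badE := by
          intro hbb; have := hN _ (Or.inr (Or.inr hbb)); simp at this; omega
        have : el 𝓕 a b m ∈ ee ⁻¹' K := by
          by_contra hne'
          exact hnotbad ⟨m, hm, (htrK hmt).2, hne'⟩
        refine ⟨m, hm, ?_⟩
        rw [← hee a b m hm hb]; exact this
      have hunb : ∀ B : ℕ, ∃ pp : ℕ × ℕ, (tr pp.1 pp.2).Nonempty ∧ B ≤ pp.1 + pp.2 := by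
        intro B
        by_contra hcon
        push_neg at hcon
        apply hPinf
        apply (finite_small_sum B).subset
        intro pp hpp
        have := hcon pp hpp
        simp only [Set.mem_setOf_eq]
        omega
      have w_up : ∀ a b, (tr a b).Nonempty → N ≤ a + b → ∀ k,
          (tr a (b + k)).Nonempty := by
        intro a b h hab k
        induction k with
        | zero => exact h
        | succ k ih => exact cV' a (b + k) (by omega) ih
      have w_right : ∀ a b, (tr a b).Nonempty → N ≤ a + b → ∀ k,
          (tr (a + k) b).Nonempty := by
        intro a b h hab k
        induction k with
        | zero => exact h
        | succ k ih => exact cU' (a + k) b (by omega) ih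
      have w_left : ∀ (k a b : ℕ), (tr a b).Nonempty → N ≤ b →
          (tr (a - k) b).Nonempty := by
        intro k
        induction k with
        | zero => intro a b h _; simpa using h
        | succ k ih =>
          intro a b h hNb
          have ihk := ih a b h hNb
          by_cases hz : a - k = 0
          · rw [show a - (k + 1) = a - k by omega]; exact ihk
          · have := cD' (a - k) b (by omega) (by omega) ihk
            rwa [show a - k - 1 = a - (k + 1) by omega] at this
      have w_down : ∀ (k a b : ℕ), (tr a (b + k)).Nonempty → N ≤ a + b →
          (tr a b).Nonempty := by
        intro k
        induction k with
        | zero => intro a b h _; exact h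
        | succ k ih =>
          intro a b h hab
          apply ih a b _ hab
          have := cE' a (b + (k + 1)) (by omega) (by omega) h
          rwa [show b + (k + 1) - 1 = b + k by omega] at this
      refine ⟨N, fun a b hab => ?_⟩
      obtain ⟨⟨a₀, b₀⟩, hp₀, hsum₀⟩ := hunb N
      have h1 : (tr a₀ (b₀ + (N + b))).Nonempty := w_up a₀ b₀ hp₀ hsum₀ (N + b)
      have hNB : N ≤ b₀ + (N + b) := by omega
      have h2 : (tr a (b₀ + (N + b))).Nonempty := by
        by_cases hcmp : a₀ ≤ a
        · have := w_right a₀ (b₀ + (N + b)) h1 (by omega) (a - a₀)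
          rwa [show a₀ + (a - a₀) = a by omega] at this
        · have := w_left (a₀ - a) a₀ (b₀ + (N + b)) h1 hNB
          rwa [show a₀ - (a₀ - a) = a by omega] at this
      have h3 := w_down (b₀ + (N + b) - b) a b
        (by rwa [show b + (b₀ + (N + b) - b) = b₀ + (N + b) by omega]) hab
      exact h3
  -- the β argument
  obtain ⟨N₀, hN₀⟩ := hOCC
  set β : ℕ → ℕ → ℕ := fun a b => sInf (tr a b) with hβdef
  have hβmem : ∀ a b, N₀ ≤ a + b → β a b ∈ tr a b := fun a b h => Nat.sInf_mem (hN₀ a b h)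
  have hβle : ∀ a b m, m ∈ tr a b → β a b ≤ m := fun a b m hm => Nat.sInf_le hm
  set badU := {pp : ℕ × ℕ | ∃ m, Mem 𝓕 m ∧ el 𝓕 pp.1 pp.2 m ∈ K \ uu ⁻¹' K} with hbadU
  set badD := {pp : ℕ × ℕ | ∃ m, Mem 𝓕 m ∧ el 𝓕 pp.1 pp.2 m ∈ K \ dd ⁻¹' K} with hbadD
  set badV := {pp : ℕ × ℕ | ∃ m, Mem 𝓕 m ∧ el 𝓕 pp.1 pp.2 m ∈ K \ vv ⁻¹' K} with hbadV
  set badE := {pp : ℕ × ℕ | ∃ m, Mem 𝓕 m ∧ el 𝓕 pp.1 pp.2 m ∈ K \ ee ⁻¹' K} with hbadE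
  obtain ⟨N₁, hN₁⟩ := bound_of_finite
    (((hposfin _ hEuu).union (hposfin _ hEdd)).union
      ((hposfin _ hEvv).union (hposfin _ hEee)))
  set NN := N₀ + N₁ with hNNdef
  have hstepU : ∀ a b, NN ≤ a + b → β (a + 1) b = β a b := by
    intro a b hab
    have h1 : β (a + 1) b ≤ β a b := by
      have hm := hβmem a b (by omega)
      have hMm := (htrK hm).1
      have hnb : (a, b) ∉ badU := by
        intro hbb
        have := hN₁ _ (Or.inl (Or.inl hbb)); simp only at this; omega
      have hpre : el 𝓕 a b (β a b) ∈ uu ⁻¹' K := by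
        by_contra hne'
        exact hnb ⟨_, hMm, (htrK hm).2, hne'⟩
      refine hβle _ _ _ ⟨hMm, ?_⟩
      rw [← huu a b _ hMm]; exact hpre
    have h2 : β a b ≤ β (a + 1) b := by
      have hm := hβmem (a + 1) b (by omega)
      have hMm := (htrK hm).1
      have hnb : (a + 1, b) ∉ badD := by
        intro hbb
        have := hN₁ _ (Or.inl (Or.inr hbb)); simp only at this; omega
      have hpre : el 𝓕 (a + 1) b (β (a + 1) b) ∈ dd ⁻¹' K := by
        by_contra hne'
        exact hnb ⟨_, hMm, (htrK hm).2, hne'⟩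
      refine hβle _ _ _ ⟨hMm, ?_⟩
      have hd := hdd (a + 1) b _ hMm (by omega)
      rw [show a + 1 - 1 = a by omega] at hd
      rw [← hd]; exact hpre
    omega
  have hstepV : ∀ a b, NN ≤ a + b → β a (b + 1) = β a b := by
    intro a b hab
    have h1 : β a (b + 1) ≤ β a b := by
      have hm := hβmem a b (by omega)
      have hMm := (htrK hm).1
      have hnb : (a, b) ∉ badV := by
        intro hbb
        have := hN₁ _ (Or.inr (Or.inl hbb)); simp only at this; omega
      have hpre : el 𝓕 a b (β a b) ∈ vv ⁻¹' K := by
        by_contra hne'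
        exact hnb ⟨_, hMm, (htrK hm).2, hne'⟩
      refine hβle _ _ _ ⟨hMm, ?_⟩
      rw [← hvv a b _ hMm]; exact hpre
    have h2 : β a b ≤ β a (b + 1) := by
      have hm := hβmem a (b + 1) (by omega)
      have hMm := (htrK hm).1
      have hnb : (a, b + 1) ∉ badE := by
        intro hbb
        have := hN₁ _ (Or.inr (Or.inr hbb)); simp only at this; omega
      have hpre : el 𝓕 a (b + 1) (β a (b + 1)) ∈ ee ⁻¹' K := by
        by_contra hne'
        exact hnb ⟨_, hMm, (htrK hm).2, hne'⟩
      refine hβle _ _ _ ⟨hMm, ?_⟩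
      have hd := hee a (b + 1) _ hMm (by omega)
      rw [show b + 1 - 1 = b by omega] at hd
      rw [← hd]; exact hpre
    omega
  have hconstR : ∀ a b k, NN ≤ a + b → β (a + k) b = β a b := by
    intro a b k hab
    induction k with
    | zero => rfl
    | succ k ih => rw [show a + (k + 1) = (a + k) + 1 by omega, hstepU (a + k) b (by omega), ih]
  have hconstV : ∀ a b k, NN ≤ a + b → β a (b + k) = β a b := by
    intro a b k hab
    induction k with
    | zero => rfl
    | succ k ih => rw [show b + (k + 1) = (b + k) + 1 by omega, hstepV a (b + k) (by omega), ih]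
  set mstar := β NN 0 with hmstardef
  have hβall : ∀ a b, NN ≤ a + b → β a b = mstar := by
    intro a b hab
    have e1 : β (a + NN) b = β a b := hconstR a b NN hab
    have e2 : β (NN + a) 0 = β NN 0 := hconstR NN 0 a (by omega)
    have e3 : β (NN + a) (0 + b) = β (NN + a) 0 := hconstV (NN + a) 0 b (by omega)
    rw [show a + NN = NN + a by omega] at e1
    rw [show (0 : ℕ) + b = b by omega] at e3
    rw [← e1, e3, e2]
  have hMstar : Mem 𝓕 mstar ∧ el 𝓕 NN 0 mstar ∈ K := by
    have := hβmem NN 0 (by omega)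
    exact htrK this
  refine ⟨Set.Ici mstar, hMstar.1, ?_⟩
  have hsubimg : {x : BF0 𝓕 | ∃ i j : ℕ, x = some (i, j, ⟨Set.Ici mstar, hMstar.1⟩)} \ U
      ⊆ (fun pp : ℕ × ℕ => el 𝓕 pp.1 pp.2 mstar) '' {pp : ℕ × ℕ | pp.1 + pp.2 < NN} := by
    rintro x ⟨⟨i, j, rfl⟩, hxU⟩
    have helx : (some (i, j, ⟨Set.Ici mstar, hMstar.1⟩) : BF0 𝓕) = el 𝓕 i j mstar :=
      (el_def i j mstar hMstar.1).symm
    by_cases hij : NN ≤ i + j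
    · exfalso
      have htr : mstar ∈ tr i j := by
        have := hβmem i j (by omega)
        rwa [hβall i j hij] at this
      apply hxU
      rw [helx]
      exact hKU (htrK htr).2
    · exact ⟨(i, j), by simp only [Set.mem_setOf_eq]; omega, helx.symm⟩
  exact ((finite_small_sum NN).image _).subset hsubimg
end
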